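/- For 1 ≤ p < ∞, c > 0, ε > 0 and base metric d, the directed graph GOSPA distance d^{(c,ε)}(X,Y) = min_{W∈𝒲_{X,Y}} (tr[D_{X,Y}ᵀW] + (ε^p/4)(‖A_X W' − W' A_Y‖ + ‖A_Y W'ᵀ − W'ᵀ A_X‖))^{1/p} is a metric on the space of directed graphs with node attributes (identity, symmetry and triangle inequality hold); the same holds for its LP relaxation obtained by minimizing over 𝒲̄_{X,Y} instead of 𝒲_{X,Y}. -/

import Mathlib

open scoped BigOperators Matrix

namespace GraphGOSPA

/-- A directed (possibly weighted) graph with node attributes in a metric space `𝕏`: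
a finite list of distinct nodes together with a (not necessarily symmetric) real
adjacency matrix; `A i j ≠ 0` exactly when there is a directed edge from node `i`
to node `j` of weight `A i j`. -/
structure DiGraph (𝕏 : Type*) [MetricSpace 𝕏] where
  n : ℕ
  nodes : Fin n → 𝕏
  nodes_inj : Function.Injective nodes
  A : Matrix (Fin n) (Fin n) ℝ

variable {𝕏 : Type*} [MetricSpace 𝕏]

/-- Componentwise 1-norm of a matrix. -/
def onorm {m n : ℕ} (M : Matrix (Fin m) (Fin n) ℝ) : ℝ :=
  ∑ i, ∑ j, |M i j|

/-- The top-left `m × n` block of an `(m+1) × (n+1)` matrix. -/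
def topLeft {m n : ℕ} (W : Matrix (Fin (m+1)) (Fin (n+1)) ℝ) :
    Matrix (Fin m) (Fin n) ℝ :=
  fun i j => W i.castSucc j.castSucc

/-- The set `𝒲_{X,Y}` of binary assignment matrices: entries in `{0,1}`,
each of the first `nY` columns sums to 1, each of the first `nX` rows sums to 1,
and the bottom-right corner is 0. -/
def Wset (nX nY : ℕ) : Set (Matrix (Fin (nX+1)) (Fin (nY+1)) ℝ) :=
  {W | (∀ i j, W i j = 0 ∨ W i j = 1) ∧
    (∀ j : Fin nY, ∑ i, W i j.castSucc = 1) ∧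
    (∀ i : Fin nX, ∑ j, W i.castSucc j = 1) ∧
    W (Fin.last nX) (Fin.last nY) = 0}

/-- The relaxed set `𝒲̄_{X,Y}`: nonnegative entries, with the same row/column sum
constraints and zero bottom-right corner. -/
def WbarSet (nX nY : ℕ) : Set (Matrix (Fin (nX+1)) (Fin (nY+1)) ℝ) :=
  {W | (∀ i j, 0 ≤ W i j) ∧
    (∀ j : Fin nY, ∑ i, W i j.castSucc = 1) ∧
    (∀ i : Fin nX, ∑ j, W i.castSucc j = 1) ∧
    W (Fin.last nX) (Fin.last nY) = 0}

/-- The cost matrix `D_{X,Y}`. -/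
noncomputable def Dmat (p c : ℝ) (X Y : DiGraph 𝕏) :
    Matrix (Fin (X.n+1)) (Fin (Y.n+1)) ℝ :=
  fun i j =>
    if hi : (i : ℕ) < X.n then
      if hj : (j : ℕ) < Y.n then dist (X.nodes ⟨i, hi⟩) (Y.nodes ⟨j, hj⟩) ^ p
      else c ^ p / 2
    else if (j : ℕ) < Y.n then c ^ p / 2 else 0

/-- The directed graph GOSPA objective
`tr[D_{X,Y}ᵀ W] + (ε^p/4)(‖A_X W' − W' A_Y‖ + ‖A_Y W'ᵀ − W'ᵀ A_X‖)`. -/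
noncomputable def objD (p c ε : ℝ) (X Y : DiGraph 𝕏)
    (W : Matrix (Fin (X.n+1)) (Fin (Y.n+1)) ℝ) : ℝ :=
  Matrix.trace ((Dmat p c X Y)ᵀ * W) +
    ε ^ p / 4 * (onorm (X.A * topLeft W - topLeft W * Y.A) +
      onorm (Y.A * (topLeft W)ᵀ - (topLeft W)ᵀ * X.A))

/-- The directed graph GOSPA distance (minimum over binary assignment matrices). -/
noncomputable def gospaD (p c ε : ℝ) (X Y : DiGraph 𝕏) : ℝ :=
  sInf {v | ∃ W ∈ Wset X.n Y.n, v = objD p c ε X Y W} ^ (1 / p)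

/-- The LP relaxation of the directed graph GOSPA distance (minimum over relaxed
assignment matrices). -/
noncomputable def gospaDLP (p c ε : ℝ) (X Y : DiGraph 𝕏) : ℝ :=
  sInf {v | ∃ W ∈ WbarSet X.n Y.n, v = objD p c ε X Y W} ^ (1 / p)

/-- The node set of a directed graph. -/
def nodeSet (X : DiGraph 𝕏) : Set 𝕏 := Set.range X.nodes

/-- The weighted directed edge set of a directed graph: ordered pairs of node
attributes together with the (nonzero) weight of the corresponding directed edge. -/
def dEdgeSet (X : DiGraph 𝕏) : Set (𝕏 × 𝕏 × ℝ) :=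
  {e | ∃ i j, X.A i j ≠ 0 ∧ e = (X.nodes i, X.nodes j, X.A i j)}

/-- Two directed graphs are equal when they have the same node set and the same
weighted directed edge set. -/
def DiGraphEq (X Y : DiGraph 𝕏) : Prop :=
  nodeSet X = nodeSet Y ∧ dEdgeSet X = dEdgeSet Y



section Helpers

open Finset

variable {𝕏 : Type*} [MetricSpace 𝕏]

lemma onorm_nonneg {m n : ℕ} (M : Matrix (Fin m) (Fin n) ℝ) : 0 ≤ onorm M :=
  Finset.sum_nonneg fun _ _ => Finset.sum_nonneg fun _ _ => abs_nonneg _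

lemma onorm_eq_zero {m n : ℕ} {M : Matrix (Fin m) (Fin n) ℝ} (h : onorm M = 0) : M = 0 := by
  ext i j
  have h1 : ∀ i ∈ Finset.univ (α := Fin m), (0:ℝ) ≤ ∑ j, |M i j| :=
    fun _ _ => Finset.sum_nonneg fun _ _ => abs_nonneg _
  have h2 := (Finset.sum_eq_zero_iff_of_nonneg h1).mp h i (Finset.mem_univ i)
  have h3 := (Finset.sum_eq_zero_iff_of_nonneg (fun _ _ => abs_nonneg _)).mp h2 j (Finset.mem_univ j)
  simpa using abs_eq_zero.mp h3

lemma onorm_add_le {m n : ℕ} (M N : Matrix (Fin m) (Fin n) ℝ) :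
    onorm (M + N) ≤ onorm M + onorm N := by
  unfold onorm
  rw [← Finset.sum_add_distrib]
  refine Finset.sum_le_sum fun i _ => ?_
  rw [← Finset.sum_add_distrib]
  exact Finset.sum_le_sum fun j _ => abs_add_le _ _

lemma onorm_mul_le_right {m n q : ℕ} (M : Matrix (Fin m) (Fin n) ℝ)
    (V : Matrix (Fin n) (Fin q) ℝ) (hV : ∀ k j, 0 ≤ V k j)
    (hrow : ∀ k, ∑ j, V k j ≤ 1) : onorm (M * V) ≤ onorm M := by
  unfold onorm
  have step1 : ∀ i, ∑ j, |(M * V) i j| ≤ ∑ k, |M i k| * ∑ j, V k j := by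
    intro i
    have : ∀ j, |(M * V) i j| ≤ ∑ k, |M i k| * V k j := by
      intro j
      rw [Matrix.mul_apply]
      refine (Finset.abs_sum_le_sum_abs _ _).trans ?_
      refine Finset.sum_le_sum fun k _ => ?_
      rw [abs_mul, abs_of_nonneg (hV k j)]
    calc ∑ j, |(M * V) i j| ≤ ∑ j, ∑ k, |M i k| * V k j :=
          Finset.sum_le_sum fun j _ => this j
      _ = ∑ k, |M i k| * ∑ j, V k j := by
          rw [Finset.sum_comm]; simp [Finset.mul_sum]
  refine (Finset.sum_le_sum fun i _ => step1 i).trans ?_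
  refine Finset.sum_le_sum fun i _ => ?_
  refine Finset.sum_le_sum fun k _ => ?_
  calc |M i k| * ∑ j, V k j ≤ |M i k| * 1 :=
        mul_le_mul_of_nonneg_left (hrow k) (abs_nonneg _)
    _ = |M i k| := mul_one _

lemma onorm_mul_le_left {m n q : ℕ} (V : Matrix (Fin m) (Fin n) ℝ)
    (M : Matrix (Fin n) (Fin q) ℝ) (hV : ∀ i k, 0 ≤ V i k)
    (hcol : ∀ k, ∑ i, V i k ≤ 1) : onorm (V * M) ≤ onorm M := by
  unfold onorm
  have step1 : ∀ j, ∑ i, |(V * M) i j| ≤ ∑ k, (∑ i, V i k) * |M k j| := by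
    intro j
    have : ∀ i, |(V * M) i j| ≤ ∑ k, V i k * |M k j| := by
      intro i
      rw [Matrix.mul_apply]
      refine (Finset.abs_sum_le_sum_abs _ _).trans ?_
      refine Finset.sum_le_sum fun k _ => ?_
      rw [abs_mul, abs_of_nonneg (hV i k)]
    calc ∑ i, |(V * M) i j| ≤ ∑ i, ∑ k, V i k * |M k j| :=
          Finset.sum_le_sum fun i _ => this i
      _ = ∑ k, (∑ i, V i k) * |M k j| := by
          rw [Finset.sum_comm]; simp [Finset.sum_mul]
  calc ∑ i, ∑ j, |(V * M) i j| = ∑ j, ∑ i, |(V * M) i j| := Finset.sum_comm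
    _ ≤ ∑ j, ∑ k, (∑ i, V i k) * |M k j| := Finset.sum_le_sum fun j _ => step1 j
    _ ≤ ∑ j, ∑ k, 1 * |M k j| := by
        refine Finset.sum_le_sum fun j _ => Finset.sum_le_sum fun k _ => ?_
        exact mul_le_mul_of_nonneg_right (hcol k) (abs_nonneg _)
    _ = ∑ k, ∑ j, |M k j| := by rw [Finset.sum_comm]; simp

lemma trace_form {a b : ℕ} (D W : Matrix (Fin a) (Fin b) ℝ) :
    Matrix.trace (Dᵀ * W) = ∑ i, ∑ j, D i j * W i j := by
  rw [Matrix.trace]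
  simp only [Matrix.diag_apply, Matrix.mul_apply, Matrix.transpose_apply]
  rw [Finset.sum_comm]

lemma Dmat_cc {p c : ℝ} (X Y : DiGraph 𝕏) (i : Fin X.n) (j : Fin Y.n) :
    Dmat p c X Y i.castSucc j.castSucc = dist (X.nodes i) (Y.nodes j) ^ p := by
  have hi : ((i.castSucc : Fin (X.n+1)) : ℕ) < X.n := by simp [i.isLt]
  have hj : ((j.castSucc : Fin (Y.n+1)) : ℕ) < Y.n := by simp [j.isLt]
  simp [Dmat, hi, hj, Fin.eta]

lemma Dmat_cl {p c : ℝ} (X Y : DiGraph 𝕏) (i : Fin X.n) :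
    Dmat p c X Y i.castSucc (Fin.last Y.n) = c ^ p / 2 := by
  have hi : ((i.castSucc : Fin (X.n+1)) : ℕ) < X.n := by simp [i.isLt]
  have hj : ¬ (((Fin.last Y.n) : ℕ) < Y.n) := by simp
  simp [Dmat, hi, hj]

lemma Dmat_lc {p c : ℝ} (X Y : DiGraph 𝕏) (j : Fin Y.n) :
    Dmat p c X Y (Fin.last X.n) j.castSucc = c ^ p / 2 := by
  have hi : ¬ (((Fin.last X.n) : ℕ) < X.n) := by simp
  have hj : ((j.castSucc : Fin (Y.n+1)) : ℕ) < Y.n := by simp [j.isLt]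
  simp [Dmat, hi, hj]

lemma Dmat_ll {p c : ℝ} (X Y : DiGraph 𝕏) :
    Dmat p c X Y (Fin.last X.n) (Fin.last Y.n) = 0 := by
  simp [Dmat]

/-- decomposition of the trace term -/
lemma trace_decomp (p c : ℝ) (X Y : DiGraph 𝕏)
    (W : Matrix (Fin (X.n+1)) (Fin (Y.n+1)) ℝ) (hW : W (Fin.last X.n) (Fin.last Y.n) = 0) :
    Matrix.trace ((Dmat p c X Y)ᵀ * W) =
      (∑ i : Fin X.n, ∑ j : Fin Y.n,
        dist (X.nodes i) (Y.nodes j) ^ p * W i.castSucc j.castSucc)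
      + c ^ p / 2 * (∑ i : Fin X.n, W i.castSucc (Fin.last Y.n))
      + c ^ p / 2 * (∑ j : Fin Y.n, W (Fin.last X.n) j.castSucc) := by
  rw [trace_form]
  rw [Fin.sum_univ_castSucc (f := fun i => ∑ j, Dmat p c X Y i j * W i j)]
  have h1 : ∀ i : Fin X.n, ∑ j, Dmat p c X Y i.castSucc j * W i.castSucc j =
      (∑ j : Fin Y.n, dist (X.nodes i) (Y.nodes j) ^ p * W i.castSucc j.castSucc)
      + c ^ p / 2 * W i.castSucc (Fin.last Y.n) := by
    intro i
    rw [Fin.sum_univ_castSucc (f := fun j => Dmat p c X Y i.castSucc j * W i.castSucc j)]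
    simp [Dmat_cc, Dmat_cl]
  have h2 : ∑ j, Dmat p c X Y (Fin.last X.n) j * W (Fin.last X.n) j =
      c ^ p / 2 * (∑ j : Fin Y.n, W (Fin.last X.n) j.castSucc) := by
    rw [Fin.sum_univ_castSucc (f := fun j => Dmat p c X Y (Fin.last X.n) j * W (Fin.last X.n) j)]
    simp [Dmat_lc, Dmat_ll, Finset.mul_sum]
  rw [h2]
  rw [Finset.sum_congr rfl (fun i _ => h1 i)]
  rw [Finset.sum_add_distrib, ← Finset.mul_sum]

-- WbarSet facts
lemma Wset_subset_Wbar {m n : ℕ} : Wset m n ⊆ WbarSet m n := by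
  rintro W ⟨h01, hcol, hrow, hcor⟩
  refine ⟨fun i j => ?_, hcol, hrow, hcor⟩
  rcases h01 i j with h | h <;> rw [h] <;> norm_num

lemma Wbar_entry_le_one {m n : ℕ} {W : Matrix (Fin (m+1)) (Fin (n+1)) ℝ}
    (hW : W ∈ WbarSet m n) (i : Fin (m+1)) (j : Fin (n+1)) : W i j ≤ 1 := by
  obtain ⟨h0, hcol, hrow, hcor⟩ := hW
  rcases Fin.eq_castSucc_or_eq_last i with ⟨i', rfl⟩ | rfl
  · rw [← hrow i']
    exact Finset.single_le_sum (fun k _ => h0 _ k) (Finset.mem_univ j)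
  · rcases Fin.eq_castSucc_or_eq_last j with ⟨j', rfl⟩ | rfl
    · rw [← hcol j']
      exact Finset.single_le_sum (fun k _ => h0 k _) (Finset.mem_univ (Fin.last m))
    · rw [hcor]; norm_num

/-- sum over the real columns of a real row -/
lemma Wbar_row_split {m n : ℕ} {W : Matrix (Fin (m+1)) (Fin (n+1)) ℝ}
    (hW : W ∈ WbarSet m n) (i : Fin m) :
    (∑ j : Fin n, W i.castSucc j.castSucc) + W i.castSucc (Fin.last n) = 1 := by
  obtain ⟨h0, hcol, hrow, hcor⟩ := hW
  rw [← hrow i, Fin.sum_univ_castSucc (f := fun j => W i.castSucc j)]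

lemma Wbar_col_split {m n : ℕ} {W : Matrix (Fin (m+1)) (Fin (n+1)) ℝ}
    (hW : W ∈ WbarSet m n) (j : Fin n) :
    (∑ i : Fin m, W i.castSucc j.castSucc) + W (Fin.last m) j.castSucc = 1 := by
  obtain ⟨h0, hcol, hrow, hcor⟩ := hW
  rw [← hcol j, Fin.sum_univ_castSucc (f := fun i => W i j.castSucc)]

lemma topLeft_row_le {m n : ℕ} {W : Matrix (Fin (m+1)) (Fin (n+1)) ℝ}
    (hW : W ∈ WbarSet m n) (i : Fin m) : ∑ j : Fin n, topLeft W i j ≤ 1 := by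
  have := Wbar_row_split hW i
  have h0 := hW.1 i.castSucc (Fin.last n)
  unfold topLeft
  linarith

lemma topLeft_col_le {m n : ℕ} {W : Matrix (Fin (m+1)) (Fin (n+1)) ℝ}
    (hW : W ∈ WbarSet m n) (j : Fin n) : ∑ i : Fin m, topLeft W i j ≤ 1 := by
  have := Wbar_col_split hW j
  have h0 := hW.1 (Fin.last m) j.castSucc
  unfold topLeft
  linarith

lemma objD_nonneg {p c ε : ℝ} (hp : 1 ≤ p) (hc : 0 < c) (hε : 0 < ε)
    (X Y : DiGraph 𝕏) {W : Matrix (Fin (X.n+1)) (Fin (Y.n+1)) ℝ}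
    (hW : W ∈ WbarSet X.n Y.n) : 0 ≤ objD p c ε X Y W := by
  have h0 := hW.1
  rw [objD, trace_decomp p c X Y W hW.2.2.2]
  have hcp : 0 ≤ c ^ p / 2 := by positivity
  have hεp : 0 ≤ ε ^ p / 4 := by positivity
  have t1 : 0 ≤ ∑ i : Fin X.n, ∑ j : Fin Y.n,
      dist (X.nodes i) (Y.nodes j) ^ p * W i.castSucc j.castSucc := by
    refine Finset.sum_nonneg fun i _ => Finset.sum_nonneg fun j _ => ?_
    exact mul_nonneg (Real.rpow_nonneg dist_nonneg _) (h0 _ _)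
  have t2 : 0 ≤ ∑ i : Fin X.n, W i.castSucc (Fin.last Y.n) :=
    Finset.sum_nonneg fun i _ => h0 _ _
  have t3 : 0 ≤ ∑ j : Fin Y.n, W (Fin.last X.n) j.castSucc :=
    Finset.sum_nonneg fun j _ => h0 _ _
  have t4 := onorm_nonneg (X.A * topLeft W - topLeft W * Y.A)
  have t5 := onorm_nonneg (Y.A * (topLeft W)ᵀ - (topLeft W)ᵀ * X.A)
  nlinarith [mul_nonneg hcp t2, mul_nonneg hcp t3, mul_nonneg hεp (add_nonneg t4 t5)]

lemma continuous_entry {a b : ℕ} (i : Fin a) (j : Fin b) :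
    Continuous fun W : Matrix (Fin a) (Fin b) ℝ => W i j :=
  (continuous_apply j).comp (continuous_apply i)

lemma continuous_onorm_affine {a b a' b' : ℕ}
    (F : Matrix (Fin a) (Fin b) ℝ → Matrix (Fin a') (Fin b') ℝ)
    (hF : ∀ i j, Continuous fun W => F W i j) :
    Continuous fun W => onorm (F W) := by
  unfold onorm
  refine continuous_finset_sum _ fun i _ => continuous_finset_sum _ fun j _ => ?_
  exact continuous_abs.comp (hF i j)

lemma continuous_objD (p c ε : ℝ) (X Y : DiGraph 𝕏) :
    Continuous (objD p c ε X Y) := by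
  unfold objD
  refine Continuous.add ?_ (Continuous.mul continuous_const (Continuous.add ?_ ?_))
  · have : (fun W : Matrix (Fin (X.n+1)) (Fin (Y.n+1)) ℝ =>
        Matrix.trace ((Dmat p c X Y)ᵀ * W)) =
        fun W => ∑ i, ∑ j, Dmat p c X Y i j * W i j := by
      funext W; exact trace_form _ _
    rw [this]
    refine continuous_finset_sum _ fun i _ => continuous_finset_sum _ fun j _ => ?_
    exact continuous_const.mul (continuous_entry i j)
  · refine continuous_onorm_affine _ fun i j => ?_
    simp only [Matrix.sub_apply, Matrix.mul_apply]
    refine Continuous.sub ?_ ?_ <;>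
      refine continuous_finset_sum _ fun k _ => ?_
    · exact continuous_const.mul (continuous_entry _ _)
    · exact (continuous_entry _ _).mul continuous_const
  · refine continuous_onorm_affine _ fun i j => ?_
    simp only [Matrix.sub_apply, Matrix.mul_apply, Matrix.transpose_apply]
    refine Continuous.sub ?_ ?_ <;>
      refine continuous_finset_sum _ fun k _ => ?_
    · exact continuous_const.mul (continuous_entry _ _)
    · exact (continuous_entry _ _).mul continuous_const

lemma isClosed_Wbar (m n : ℕ) : IsClosed (WbarSet m n) := by
  have h1 : WbarSet m n =
      (⋂ (i : Fin (m+1)) (j : Fin (n+1)), {W | 0 ≤ W i j}) ∩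
      ((⋂ (j : Fin n), {W | ∑ i, W i j.castSucc = 1}) ∩
      ((⋂ (i : Fin m), {W | ∑ j, W i.castSucc j = 1}) ∩
        {W | W (Fin.last m) (Fin.last n) = 0})) := by
    ext W
    simp only [WbarSet, Set.mem_setOf_eq, Set.mem_inter_iff, Set.mem_iInter]
  rw [h1]
  refine IsClosed.inter ?_ (IsClosed.inter ?_ (IsClosed.inter ?_ ?_))
  · exact isClosed_iInter fun i => isClosed_iInter fun j =>
      isClosed_le continuous_const (continuous_entry i j)
  · exact isClosed_iInter fun j => isClosed_eq
      (continuous_finset_sum _ fun i _ => continuous_entry i j.castSucc) continuous_const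
  · exact isClosed_iInter fun i => isClosed_eq
      (continuous_finset_sum _ fun j _ => continuous_entry i.castSucc j) continuous_const
  · exact isClosed_eq (continuous_entry _ _) continuous_const

lemma isClosed_Wset (m n : ℕ) : IsClosed (Wset m n) := by
  have h1 : Wset m n =
      (⋂ (i : Fin (m+1)) (j : Fin (n+1)), {W | W i j = 0 ∨ W i j = 1}) ∩
      ((⋂ (j : Fin n), {W | ∑ i, W i j.castSucc = 1}) ∩
      ((⋂ (i : Fin m), {W | ∑ j, W i.castSucc j = 1}) ∩
        {W | W (Fin.last m) (Fin.last n) = 0})) := by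
    ext W
    simp only [Wset, Set.mem_setOf_eq, Set.mem_inter_iff, Set.mem_iInter]
  rw [h1]
  refine IsClosed.inter ?_ (IsClosed.inter ?_ (IsClosed.inter ?_ ?_))
  · refine isClosed_iInter fun i => isClosed_iInter fun j => ?_
    have : {W : Matrix (Fin (m+1)) (Fin (n+1)) ℝ | W i j = 0 ∨ W i j = 1} =
        (fun W : Matrix (Fin (m+1)) (Fin (n+1)) ℝ => W i j) ⁻¹' ({0, 1} : Set ℝ) := by
      ext W; simp [Set.mem_preimage]
    rw [this]
    exact IsClosed.preimage (continuous_entry i j) (Set.Finite.isClosed (by simp))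
  · exact isClosed_iInter fun j => isClosed_eq
      (continuous_finset_sum _ fun i _ => continuous_entry i j.castSucc) continuous_const
  · exact isClosed_iInter fun i => isClosed_eq
      (continuous_finset_sum _ fun j _ => continuous_entry i.castSucc j) continuous_const
  · exact isClosed_eq (continuous_entry _ _) continuous_const

lemma isCompact_Wbar (m n : ℕ) : IsCompact (WbarSet m n) := by
  have hsub : WbarSet m n ⊆ Set.pi Set.univ
      (fun _ : Fin (m+1) => Set.pi Set.univ fun _ : Fin (n+1) => Set.Icc (0:ℝ) 1) := by
    intro W hW
    intro i _
    intro j _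
    exact ⟨hW.1 i j, Wbar_entry_le_one hW i j⟩
  exact (isCompact_univ_pi fun i => isCompact_univ_pi fun j => isCompact_Icc).of_isClosed_subset
    (isClosed_Wbar m n) hsub

lemma isCompact_Wset (m n : ℕ) : IsCompact (Wset m n) :=
  (isCompact_Wbar m n).of_isClosed_subset (isClosed_Wset m n) Wset_subset_Wbar

/-- the all-dummy assignment -/
def dummyW (m n : ℕ) : Matrix (Fin (m+1)) (Fin (n+1)) ℝ :=
  fun i j =>
    if i = Fin.last m ∧ j ≠ Fin.last n then 1
    else if i ≠ Fin.last m ∧ j = Fin.last n then 1 else 0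

lemma dummyW_mem (m n : ℕ) : dummyW m n ∈ Wset m n := by
  have hcast_ne_last : ∀ {k : ℕ} (i : Fin k), i.castSucc ≠ Fin.last k :=
    fun i => (Fin.castSucc_lt_last i).ne
  refine ⟨fun i j => ?_, fun j => ?_, fun i => ?_, ?_⟩
  · unfold dummyW
    split_ifs <;> simp
  · rw [Fin.sum_univ_castSucc (f := fun i => dummyW m n i j.castSucc)]
    have h1 : ∀ i : Fin m, dummyW m n i.castSucc j.castSucc = 0 := by
      intro i
      simp [dummyW, hcast_ne_last i, hcast_ne_last j]
    have h2 : dummyW m n (Fin.last m) j.castSucc = 1 := by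
      simp [dummyW, hcast_ne_last j]
    simp [h1, h2]
  · rw [Fin.sum_univ_castSucc (f := fun j => dummyW m n i.castSucc j)]
    have h1 : ∀ j : Fin n, dummyW m n i.castSucc j.castSucc = 0 := by
      intro j
      simp [dummyW, hcast_ne_last i, hcast_ne_last j]
    have h2 : dummyW m n i.castSucc (Fin.last n) = 1 := by
      simp [dummyW, hcast_ne_last i]
    simp [h1, h2]
  · simp [dummyW]

lemma Wset_nonempty (m n : ℕ) : (Wset m n).Nonempty := ⟨dummyW m n, dummyW_mem m n⟩

lemma Wbar_nonempty (m n : ℕ) : (WbarSet m n).Nonempty :=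
  ⟨dummyW m n, Wset_subset_Wbar (dummyW_mem m n)⟩

/-- the value set is the image -/
lemma value_set_eq (p c ε : ℝ) (X Y : DiGraph 𝕏)
    (S : Set (Matrix (Fin (X.n+1)) (Fin (Y.n+1)) ℝ)) :
    {v | ∃ W ∈ S, v = objD p c ε X Y W} = objD p c ε X Y '' S := by
  ext v
  simp [Set.mem_image, eq_comm]

/-- existence of a minimizer, with sInf characterization -/
lemma exists_min (p c ε : ℝ) (X Y : DiGraph 𝕏)
    {S : Set (Matrix (Fin (X.n+1)) (Fin (Y.n+1)) ℝ)}
    (hcomp : IsCompact S) (hne : S.Nonempty) :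
    ∃ W ∈ S, sInf {v | ∃ W' ∈ S, v = objD p c ε X Y W'} = objD p c ε X Y W
      ∧ ∀ W' ∈ S, objD p c ε X Y W ≤ objD p c ε X Y W' := by
  obtain ⟨W, hWS, hmin⟩ := hcomp.exists_isMinOn hne (continuous_objD p c ε X Y).continuousOn
  refine ⟨W, hWS, ?_, fun W' hW' => hmin hW'⟩
  rw [value_set_eq]
  refine IsLeast.csInf_eq ⟨⟨W, hWS, rfl⟩, ?_⟩
  rintro v ⟨W', hW', rfl⟩
  exact hmin hW'

lemma Dmat_symm (p c : ℝ) (X Y : DiGraph 𝕏) (i : Fin (X.n+1)) (j : Fin (Y.n+1)) :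
    Dmat p c Y X j i = Dmat p c X Y i j := by
  rcases Fin.eq_castSucc_or_eq_last i with ⟨i', rfl⟩ | rfl <;>
    rcases Fin.eq_castSucc_or_eq_last j with ⟨j', rfl⟩ | rfl
  · rw [Dmat_cc, Dmat_cc, dist_comm]
  · rw [Dmat_lc, Dmat_cl]
  · rw [Dmat_cl, Dmat_lc]
  · rw [Dmat_ll, Dmat_ll]

lemma topLeft_transpose {m n : ℕ} (W : Matrix (Fin (m+1)) (Fin (n+1)) ℝ) :
    topLeft Wᵀ = (topLeft W)ᵀ := rfl

lemma objD_symm (p c ε : ℝ) (X Y : DiGraph 𝕏) (W : Matrix (Fin (X.n+1)) (Fin (Y.n+1)) ℝ) :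
    objD p c ε Y X Wᵀ = objD p c ε X Y W := by
  unfold objD
  have htr : Matrix.trace ((Dmat p c Y X)ᵀ * Wᵀ) = Matrix.trace ((Dmat p c X Y)ᵀ * W) := by
    rw [trace_form, trace_form, Finset.sum_comm]
    exact Finset.sum_congr rfl fun i _ => Finset.sum_congr rfl fun j _ => by
      rw [Dmat_symm, Matrix.transpose_apply]
  rw [htr, topLeft_transpose, Matrix.transpose_transpose]
  ring

lemma transpose_mem_Wbar {m n : ℕ} {W : Matrix (Fin (m+1)) (Fin (n+1)) ℝ}
    (hW : W ∈ WbarSet m n) : Wᵀ ∈ WbarSet n m := by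
  obtain ⟨h0, hcol, hrow, hcor⟩ := hW
  exact ⟨fun i j => h0 j i, hrow, hcol, hcor⟩

lemma transpose_mem_Wset {m n : ℕ} {W : Matrix (Fin (m+1)) (Fin (n+1)) ℝ}
    (hW : W ∈ Wset m n) : Wᵀ ∈ Wset n m := by
  obtain ⟨h0, hcol, hrow, hcor⟩ := hW
  exact ⟨fun i j => h0 j i, hrow, hcol, hcor⟩

lemma gospaD_symm (p c ε : ℝ) (X Y : DiGraph 𝕏) :
    gospaD p c ε X Y = gospaD p c ε Y X := by
  unfold gospaD
  congr 1
  congr 1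
  ext v
  constructor
  · rintro ⟨W, hW, rfl⟩
    exact ⟨Wᵀ, transpose_mem_Wset hW, (objD_symm p c ε X Y W).symm⟩
  · rintro ⟨W, hW, rfl⟩
    exact ⟨Wᵀ, transpose_mem_Wset hW, (objD_symm p c ε Y X W).symm⟩

lemma gospaDLP_symm (p c ε : ℝ) (X Y : DiGraph 𝕏) :
    gospaDLP p c ε X Y = gospaDLP p c ε Y X := by
  unfold gospaDLP
  congr 1
  congr 1
  ext v
  constructor
  · rintro ⟨W, hW, rfl⟩
    exact ⟨Wᵀ, transpose_mem_Wbar hW, (objD_symm p c ε X Y W).symm⟩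
  · rintro ⟨W, hW, rfl⟩
    exact ⟨Wᵀ, transpose_mem_Wbar hW, (objD_symm p c ε Y X W).symm⟩

lemma onorm_zero {m n : ℕ} : onorm (0 : Matrix (Fin m) (Fin n) ℝ) = 0 := by
  simp [onorm]

/-- permutation assignment matrix -/
noncomputable def permW {m n : ℕ} (e : Fin m ≃ Fin n) : Matrix (Fin (m+1)) (Fin (n+1)) ℝ :=
  fun i j => Fin.lastCases 0 (fun i' => if j = (e i').castSucc then 1 else 0) i

@[simp] lemma permW_castSucc {m n : ℕ} (e : Fin m ≃ Fin n) (i : Fin m) (j : Fin (n+1)) :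
    permW e i.castSucc j = if j = (e i).castSucc then 1 else 0 := by
  simp [permW]

@[simp] lemma permW_last {m n : ℕ} (e : Fin m ≃ Fin n) (j : Fin (n+1)) :
    permW e (Fin.last m) j = 0 := by
  simp [permW]

lemma permW_mem {m n : ℕ} (e : Fin m ≃ Fin n) : permW e ∈ Wset m n := by
  refine ⟨fun i j => ?_, fun j => ?_, fun i => ?_, by simp⟩
  · rcases Fin.eq_castSucc_or_eq_last i with ⟨i', rfl⟩ | rfl
    · rw [permW_castSucc]; split_ifs <;> simp
    · simp
  · rw [Fin.sum_univ_castSucc (f := fun i => permW e i j.castSucc)]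
    have h1 : ∀ i' : Fin m, permW e i'.castSucc j.castSucc =
        if i' = e.symm j then 1 else 0 := by
      intro i'
      rw [permW_castSucc]
      by_cases h : i' = e.symm j
      · subst h
        simp
      · rw [if_neg h, if_neg]
        rw [Fin.castSucc_inj]
        intro hh
        exact h (by rw [hh]; simp)
    simp [h1]
  · have h1 : ∀ j, permW e i.castSucc j = if j = (e i).castSucc then 1 else 0 :=
      fun j => permW_castSucc e i j
    simp [h1]

lemma topLeft_permW {m n : ℕ} (e : Fin m ≃ Fin n) :
    topLeft (permW e) = fun i j => if j = e i then 1 else 0 := by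
  funext i j
  unfold topLeft
  rw [permW_castSucc]
  simp [Fin.castSucc_inj]

lemma permW_obj_zero (p c ε : ℝ) (hp : 1 ≤ p) (X Y : DiGraph 𝕏)
    (e : Fin X.n ≃ Fin Y.n) (hnodes : ∀ i, Y.nodes (e i) = X.nodes i)
    (hA : ∀ i k, X.A i k = Y.A (e i) (e k)) :
    objD p c ε X Y (permW e) = 0 := by
  have hp0 : p ≠ 0 := by intro h; rw [h] at hp; norm_num at hp
  have hP : topLeft (permW e) = fun i j => if j = e i then 1 else 0 := topLeft_permW e
  have h1 : X.A * topLeft (permW e) = topLeft (permW e) * Y.A := by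
    rw [hP]
    ext i j
    show ∑ k, X.A i k * (if j = e k then (1:ℝ) else 0) = ∑ k, (if k = e i then (1:ℝ) else 0) * Y.A k j
    have l : ∀ k, X.A i k * (if j = e k then 1 else 0) =
        if k = e.symm j then X.A i k else 0 := by
      intro k
      by_cases h : k = e.symm j
      · subst h; simp [Equiv.apply_symm_apply]
      · have : ¬ j = e k := fun hh => h (by rw [hh]; simp)
        simp [h, this]
    have r : ∀ k, (if k = e i then 1 else 0) * Y.A k j =
        if k = e i then Y.A k j else 0 := by
      intro k; split_ifs <;> simp
    simp only [l, r, Finset.sum_ite_eq' Finset.univ]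
    simp [hA i (e.symm j)]
  have h2 : Y.A * (topLeft (permW e))ᵀ = (topLeft (permW e))ᵀ * X.A := by
    rw [hP]
    ext j i
    rw [Matrix.mul_apply, Matrix.mul_apply]
    have l : ∀ k, Y.A j k * Matrix.transpose (fun i j => if j = e i then (1:ℝ) else 0) k i =
        if k = e i then Y.A j k else 0 := by
      intro k
      show Y.A j k * (if k = e i then (1:ℝ) else 0) = _
      split_ifs <;> simp
    have r : ∀ k, Matrix.transpose (fun i j => if j = e i then (1:ℝ) else 0) j k * X.A k i =
        if k = e.symm j then X.A k i else 0 := by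
      intro k
      show (if j = e k then (1:ℝ) else 0) * X.A k i = _
      by_cases h : k = e.symm j
      · subst h; simp [Equiv.apply_symm_apply]
      · have : ¬ j = e k := fun hh => h (by rw [hh]; simp)
        simp [h, this]
    simp only [l, r, Finset.sum_ite_eq' Finset.univ]
    have := hA (e.symm j) i
    rw [Equiv.apply_symm_apply] at this
    simp [this]
  rw [objD, trace_decomp p c X Y _ (by simp)]
  have t1 : ∀ i : Fin X.n, ∀ j : Fin Y.n,
      dist (X.nodes i) (Y.nodes j) ^ p * permW e i.castSucc j.castSucc = 0 := by
    intro i j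
    rw [permW_castSucc]
    by_cases h : j = e i
    · subst h
      rw [hnodes i, dist_self, Real.zero_rpow hp0, zero_mul]
    · rw [if_neg (by rwa [Fin.castSucc_inj]), mul_zero]
  have t2 : ∀ i : Fin X.n, permW e i.castSucc (Fin.last Y.n) = 0 := by
    intro i
    rw [permW_castSucc, if_neg (Fin.castSucc_lt_last _).ne'
      ]
  have t3 : ∀ j : Fin Y.n, permW e (Fin.last X.n) j.castSucc = 0 := fun j => permW_last e _
  rw [h1, h2]
  have s1 : ∑ i : Fin X.n, ∑ j : Fin Y.n,
      dist (X.nodes i) (Y.nodes j) ^ p * permW e i.castSucc j.castSucc = 0 :=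
    Finset.sum_eq_zero fun i _ => Finset.sum_eq_zero fun j _ => t1 i j
  rw [s1, Finset.sum_eq_zero fun i _ => t2 i, Finset.sum_eq_zero fun j _ => t3 j]
  simp [sub_self, onorm_zero]

lemma equiv_of_DiGraphEq {X Y : DiGraph 𝕏} (h : DiGraphEq X Y) :
    ∃ e : Fin X.n ≃ Fin Y.n, (∀ i, Y.nodes (e i) = X.nodes i) ∧
      (∀ i k, X.A i k = Y.A (e i) (e k)) := by
  obtain ⟨hnode, hedge⟩ := h
  have hex : ∀ i : Fin X.n, ∃ j : Fin Y.n, Y.nodes j = X.nodes i := by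
    intro i
    have : X.nodes i ∈ nodeSet Y := hnode ▸ Set.mem_range_self i
    exact this
  choose σ hσ using hex
  have hinj : Function.Injective σ := by
    intro i i' hii
    apply X.nodes_inj
    rw [← hσ i, ← hσ i', hii]
  have hsurj : Function.Surjective σ := by
    intro j
    have : Y.nodes j ∈ nodeSet X := hnode ▸ Set.mem_range_self j
    obtain ⟨i, hi⟩ := this
    refine ⟨i, Y.nodes_inj ?_⟩
    rw [hσ i, hi]
  let e : Fin X.n ≃ Fin Y.n := Equiv.ofBijective σ ⟨hinj, hsurj⟩
  have he : ∀ i, e i = σ i := fun i => rfl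
  refine ⟨e, fun i => by rw [he, hσ], fun i k => ?_⟩
  rw [he, he]
  by_cases hik : X.A i k = 0
  · by_contra hY
    rw [hik] at hY
    have hmem : (Y.nodes (σ i), Y.nodes (σ k), Y.A (σ i) (σ k)) ∈ dEdgeSet X := by
      rw [hedge]
      exact ⟨σ i, σ k, fun hh => hY hh.symm, rfl⟩
    obtain ⟨a, b, hab, heq⟩ := hmem
    simp only [Prod.mk.injEq] at heq
    obtain ⟨h1, h2, h3⟩ := heq
    have ha : a = i := X.nodes_inj (by rw [← h1, hσ i])
    have hb : b = k := X.nodes_inj (by rw [← h2, hσ k])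
    rw [ha, hb] at hab
    exact hab hik
  · have hmem : (X.nodes i, X.nodes k, X.A i k) ∈ dEdgeSet Y := by
      rw [← hedge]
      exact ⟨i, k, hik, rfl⟩
    obtain ⟨a, b, hab, heq⟩ := hmem
    simp only [Prod.mk.injEq] at heq
    obtain ⟨h1, h2, h3⟩ := heq
    have ha : a = σ i := Y.nodes_inj (by rw [← h1, hσ i])
    have hb : b = σ k := Y.nodes_inj (by rw [← h2, hσ k])
    rw [← ha, ← hb]
    exact h3

lemma DiGraphEq_of_obj_zero (p c ε : ℝ) (hp : 1 ≤ p) (hc : 0 < c) (hε : 0 < ε)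
    (X Y : DiGraph 𝕏) {W : Matrix (Fin (X.n+1)) (Fin (Y.n+1)) ℝ}
    (hW : W ∈ WbarSet X.n Y.n) (h0 : objD p c ε X Y W = 0) : DiGraphEq X Y := by
  have hp0 : p ≠ 0 := by intro h; rw [h] at hp; norm_num at hp
  have hWnn := hW.1
  rw [objD, trace_decomp p c X Y W hW.2.2.2] at h0
  have hcp : 0 < c ^ p / 2 := by positivity
  have hεp : 0 < ε ^ p / 4 := by positivity
  set t1 := ∑ i : Fin X.n, ∑ j : Fin Y.n,
      dist (X.nodes i) (Y.nodes j) ^ p * W i.castSucc j.castSucc with ht1def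
  set s2 := ∑ i : Fin X.n, W i.castSucc (Fin.last Y.n) with hs2def
  set s3 := ∑ j : Fin Y.n, W (Fin.last X.n) j.castSucc with hs3def
  set o1 := onorm (X.A * topLeft W - topLeft W * Y.A) with ho1def
  set o2 := onorm (Y.A * (topLeft W)ᵀ - (topLeft W)ᵀ * X.A) with ho2def
  have ht1nn : 0 ≤ t1 := Finset.sum_nonneg fun i _ => Finset.sum_nonneg fun j _ =>
    mul_nonneg (Real.rpow_nonneg dist_nonneg _) (hWnn _ _)
  have hs2nn : 0 ≤ s2 := Finset.sum_nonneg fun i _ => hWnn _ _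
  have hs3nn : 0 ≤ s3 := Finset.sum_nonneg fun j _ => hWnn _ _
  have ho1nn : 0 ≤ o1 := onorm_nonneg _
  have ho2nn : 0 ≤ o2 := onorm_nonneg _
  have ht1 : t1 = 0 := by nlinarith
  have hs2 : s2 = 0 := by nlinarith
  have hs3 : s3 = 0 := by nlinarith
  have ho1 : o1 = 0 := by nlinarith
  -- pointwise zero products
  have hz : ∀ i : Fin X.n, ∀ j : Fin Y.n,
      dist (X.nodes i) (Y.nodes j) ^ p * W i.castSucc j.castSucc = 0 := by
    intro i j
    have hrow := (Finset.sum_eq_zero_iff_of_nonneg (fun i _ => Finset.sum_nonneg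
      (fun j _ => mul_nonneg (Real.rpow_nonneg dist_nonneg _) (hWnn _ _)))).mp ht1 i
      (Finset.mem_univ i)
    exact (Finset.sum_eq_zero_iff_of_nonneg (fun j _ =>
      mul_nonneg (Real.rpow_nonneg dist_nonneg _) (hWnn _ _))).mp hrow j (Finset.mem_univ j)
  have hz2 : ∀ i : Fin X.n, W i.castSucc (Fin.last Y.n) = 0 := fun i =>
    (Finset.sum_eq_zero_iff_of_nonneg (fun i _ => hWnn _ _)).mp hs2 i (Finset.mem_univ i)
  have hz3 : ∀ j : Fin Y.n, W (Fin.last X.n) j.castSucc = 0 := fun j =>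
    (Finset.sum_eq_zero_iff_of_nonneg (fun j _ => hWnn _ _)).mp hs3 j (Finset.mem_univ j)
  set V := topLeft W with hVdef
  have hVnn : ∀ i j, 0 ≤ V i j := fun i j => hWnn _ _
  have hrow1 : ∀ i, ∑ j, V i j = 1 := by
    intro i
    have := Wbar_row_split hW i
    rw [hz2 i, add_zero] at this
    exact this
  have hcol1 : ∀ j, ∑ i, V i j = 1 := by
    intro j
    have := Wbar_col_split hW j
    rw [hz3 j, add_zero] at this
    exact this
  have hkey : ∀ i j, V i j ≠ 0 → Y.nodes j = X.nodes i := by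
    intro i j hV
    have := hz i j
    have hd : dist (X.nodes i) (Y.nodes j) ^ p = 0 := by
      rcases mul_eq_zero.mp this with h | h
      · exact h
      · exact absurd h hV
    have := (Real.rpow_eq_zero dist_nonneg hp0).mp hd
    exact (dist_eq_zero.mp this).symm
  have hex : ∀ i, ∃ j, V i j ≠ 0 := by
    intro i
    by_contra hno
    push_neg at hno
    have : ∑ j, V i j = 0 := Finset.sum_eq_zero fun j _ => hno j
    rw [hrow1 i] at this
    norm_num at this
  choose σ hσ using hex
  have huniq : ∀ i j j', V i j ≠ 0 → V i j' ≠ 0 → j = j' := by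
    intro i j j' h1 h2
    exact Y.nodes_inj (by rw [hkey i j h1, hkey i j' h2])
  have hVσ : ∀ i j, V i j = if j = σ i then 1 else 0 := by
    intro i j
    by_cases h : j = σ i
    · rw [h, if_pos rfl]
      have hothers : ∀ b ∈ Finset.univ, b ≠ σ i → V i b = 0 := by
        intro b _ hb
        by_contra hVb
        exact hb (huniq i b (σ i) hVb (hσ i))
      have hsum := hrow1 i
      rw [Finset.sum_eq_single (σ i) hothers
        (fun h => absurd (Finset.mem_univ (σ i)) h)] at hsum
      exact hsum
    · rw [if_neg h]
      by_contra hVb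
      exact h (huniq i j (σ i) hVb (hσ i))
  have hσnodes : ∀ i, Y.nodes (σ i) = X.nodes i := fun i => hkey i (σ i) (hσ i)
  have hσinj : Function.Injective σ := by
    intro i i' hii
    apply X.nodes_inj
    rw [← hσnodes i, ← hσnodes i', hii]
  have hσsurj : Function.Surjective σ := by
    intro j
    have : ∃ i, V i j ≠ 0 := by
      by_contra hno
      push_neg at hno
      have : ∑ i, V i j = 0 := Finset.sum_eq_zero fun i _ => hno i
      rw [hcol1 j] at this
      norm_num at this
    obtain ⟨i, hi⟩ := this
    exact ⟨i, (huniq i j (σ i) hi (hσ i)).symm⟩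
  -- adjacency relation
  have hcomm : X.A * V = V * Y.A := by
    have := onorm_eq_zero ho1
    rwa [sub_eq_zero] at this
  have hA : ∀ i k, X.A i k = Y.A (σ i) (σ k) := by
    intro i k
    have hL : (X.A * V) i (σ k) = X.A i k := by
      rw [Matrix.mul_apply]
      have : ∀ t, X.A i t * V t (σ k) = if t = k then X.A i t else 0 := by
        intro t
        rw [hVσ t (σ k)]
        by_cases h : t = k
        · subst h; simp
        · rw [if_neg h, if_neg, mul_zero]
          intro hh
          exact h (hσinj hh).symm
      simp only [this, Finset.sum_ite_eq' Finset.univ]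
      simp
    have hR : (V * Y.A) i (σ k) = Y.A (σ i) (σ k) := by
      rw [Matrix.mul_apply]
      have : ∀ t, V i t * Y.A t (σ k) = if t = σ i then Y.A t (σ k) else 0 := by
        intro t
        rw [hVσ i t]
        split_ifs <;> simp
      simp only [this, Finset.sum_ite_eq' Finset.univ]
      simp
    rw [← hL, hcomm, hR]
  -- conclude
  constructor
  · apply Set.eq_of_subset_of_subset
    · rintro x ⟨i, rfl⟩
      exact ⟨σ i, hσnodes i⟩
    · rintro y ⟨j, rfl⟩
      obtain ⟨i, rfl⟩ := hσsurj j
      exact ⟨i, (hσnodes i).symm⟩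
  · apply Set.eq_of_subset_of_subset
    · rintro e ⟨i, k, hik, rfl⟩
      exact ⟨σ i, σ k, by rw [← hA]; exact hik,
        by rw [hσnodes i, hσnodes k, ← hA]⟩
    · rintro e ⟨a, b, hab, rfl⟩
      obtain ⟨i, rfl⟩ := hσsurj a
      obtain ⟨k, rfl⟩ := hσsurj b
      exact ⟨i, k, by rw [hA]; exact hab, by rw [hσnodes i, hσnodes k, hA]⟩

noncomputable def compW {a b g : ℕ} (W1 : Matrix (Fin (a+1)) (Fin (b+1)) ℝ)
    (W2 : Matrix (Fin (b+1)) (Fin (g+1)) ℝ) : Matrix (Fin (a+1)) (Fin (g+1)) ℝ :=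
  fun i j =>
    if i = Fin.last a ∧ j = Fin.last g then 0 else
      (∑ k : Fin b, W1 i k.castSucc * W2 k.castSucc j)
      + (if j = Fin.last g then W1 i (Fin.last b) else 0)
      + (if i = Fin.last a then W2 (Fin.last b) j else 0)

lemma castSucc_ne_last {k : ℕ} (i : Fin k) : i.castSucc ≠ Fin.last k :=
  (Fin.castSucc_lt_last i).ne

lemma compW_cc {a b g : ℕ} (W1 : Matrix (Fin (a+1)) (Fin (b+1)) ℝ)
    (W2 : Matrix (Fin (b+1)) (Fin (g+1)) ℝ) (i : Fin a) (j : Fin g) :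
    compW W1 W2 i.castSucc j.castSucc =
      ∑ k : Fin b, W1 i.castSucc k.castSucc * W2 k.castSucc j.castSucc := by
  unfold compW
  rw [if_neg (fun h => castSucc_ne_last i h.1)]
  rw [if_neg (castSucc_ne_last j), if_neg (castSucc_ne_last i)]
  ring

lemma compW_cl {a b g : ℕ} (W1 : Matrix (Fin (a+1)) (Fin (b+1)) ℝ)
    (W2 : Matrix (Fin (b+1)) (Fin (g+1)) ℝ) (i : Fin a) :
    compW W1 W2 i.castSucc (Fin.last g) =
      (∑ k : Fin b, W1 i.castSucc k.castSucc * W2 k.castSucc (Fin.last g))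
        + W1 i.castSucc (Fin.last b) := by
  unfold compW
  rw [if_neg (fun h => castSucc_ne_last i h.1)]
  rw [if_pos rfl, if_neg (castSucc_ne_last i)]
  ring

lemma compW_lc {a b g : ℕ} (W1 : Matrix (Fin (a+1)) (Fin (b+1)) ℝ)
    (W2 : Matrix (Fin (b+1)) (Fin (g+1)) ℝ) (j : Fin g) :
    compW W1 W2 (Fin.last a) j.castSucc =
      (∑ k : Fin b, W1 (Fin.last a) k.castSucc * W2 k.castSucc j.castSucc)
        + W2 (Fin.last b) j.castSucc := by
  unfold compW
  rw [if_neg (fun h => castSucc_ne_last j h.2)]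
  rw [if_neg (castSucc_ne_last j), if_pos rfl]
  ring

lemma compW_ll {a b g : ℕ} (W1 : Matrix (Fin (a+1)) (Fin (b+1)) ℝ)
    (W2 : Matrix (Fin (b+1)) (Fin (g+1)) ℝ) :
    compW W1 W2 (Fin.last a) (Fin.last g) = 0 := by
  unfold compW
  rw [if_pos ⟨rfl, rfl⟩]

lemma topLeft_compW {a b g : ℕ} (W1 : Matrix (Fin (a+1)) (Fin (b+1)) ℝ)
    (W2 : Matrix (Fin (b+1)) (Fin (g+1)) ℝ) :
    topLeft (compW W1 W2) = topLeft W1 * topLeft W2 := by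
  funext i j
  show compW W1 W2 i.castSucc j.castSucc = _
  rw [compW_cc, Matrix.mul_apply]
  rfl

lemma compW_mem_Wbar {a b g : ℕ} {W1 : Matrix (Fin (a+1)) (Fin (b+1)) ℝ}
    {W2 : Matrix (Fin (b+1)) (Fin (g+1)) ℝ}
    (h1 : W1 ∈ WbarSet a b) (h2 : W2 ∈ WbarSet b g) :
    compW W1 W2 ∈ WbarSet a g := by
  refine ⟨fun i j => ?_, fun j => ?_, fun i => ?_, compW_ll W1 W2⟩
  · unfold compW
    have hsum : 0 ≤ ∑ k : Fin b, W1 i k.castSucc * W2 k.castSucc j :=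
      Finset.sum_nonneg fun k _ => mul_nonneg (h1.1 _ _) (h2.1 _ _)
    have e1 : 0 ≤ (if j = Fin.last g then W1 i (Fin.last b) else 0) := by
      split_ifs
      exacts [h1.1 _ _, le_refl 0]
    have e2 : 0 ≤ (if i = Fin.last a then W2 (Fin.last b) j else 0) := by
      split_ifs
      exacts [h2.1 _ _, le_refl 0]
    by_cases h : i = Fin.last a ∧ j = Fin.last g
    · rw [if_pos h]
    · rw [if_neg h]
      exact add_nonneg (add_nonneg hsum e1) e2
  · rw [Fin.sum_univ_castSucc (f := fun i => compW W1 W2 i j.castSucc)]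
    rw [compW_lc]
    have hrewrite : ∑ i' : Fin a, compW W1 W2 i'.castSucc j.castSucc
        = ∑ k : Fin b, (∑ i' : Fin a, W1 i'.castSucc k.castSucc) * W2 k.castSucc j.castSucc := by
      simp only [compW_cc]
      rw [Finset.sum_comm]
      simp [Finset.sum_mul]
    rw [hrewrite]
    have hcombine : ∑ k : Fin b, (∑ i' : Fin a, W1 i'.castSucc k.castSucc) * W2 k.castSucc j.castSucc
        + (∑ k : Fin b, W1 (Fin.last a) k.castSucc * W2 k.castSucc j.castSucc
            + W2 (Fin.last b) j.castSucc)
        = ∑ k : Fin b, ((∑ i' : Fin a, W1 i'.castSucc k.castSucc) + W1 (Fin.last a) k.castSucc)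
            * W2 k.castSucc j.castSucc + W2 (Fin.last b) j.castSucc := by
      rw [← add_assoc, ← Finset.sum_add_distrib]
      congr 1
      exact Finset.sum_congr rfl fun k _ => by ring
    rw [hcombine]
    have hW1col : ∀ k : Fin b, (∑ i' : Fin a, W1 i'.castSucc k.castSucc)
        + W1 (Fin.last a) k.castSucc = 1 := fun k => Wbar_col_split h1 k
    calc (∑ k : Fin b, ((∑ i' : Fin a, W1 i'.castSucc k.castSucc) + W1 (Fin.last a) k.castSucc)
            * W2 k.castSucc j.castSucc) + W2 (Fin.last b) j.castSucc
        = (∑ k : Fin b, W2 k.castSucc j.castSucc) + W2 (Fin.last b) j.castSucc := by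
          congr 1
          exact Finset.sum_congr rfl fun k _ => by rw [hW1col k, one_mul]
      _ = 1 := Wbar_col_split h2 j
  · rw [Fin.sum_univ_castSucc (f := fun j => compW W1 W2 i.castSucc j)]
    rw [compW_cl]
    have hrewrite : ∑ j' : Fin g, compW W1 W2 i.castSucc j'.castSucc
        = ∑ k : Fin b, W1 i.castSucc k.castSucc * (∑ j' : Fin g, W2 k.castSucc j'.castSucc) := by
      simp only [compW_cc]
      rw [Finset.sum_comm]
      simp [Finset.mul_sum]
    rw [hrewrite]
    have hcombine : ∑ k : Fin b, W1 i.castSucc k.castSucc * (∑ j' : Fin g, W2 k.castSucc j'.castSucc)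
        + (∑ k : Fin b, W1 i.castSucc k.castSucc * W2 k.castSucc (Fin.last g)
            + W1 i.castSucc (Fin.last b))
        = ∑ k : Fin b, W1 i.castSucc k.castSucc
            * ((∑ j' : Fin g, W2 k.castSucc j'.castSucc) + W2 k.castSucc (Fin.last g))
          + W1 i.castSucc (Fin.last b) := by
      rw [← add_assoc, ← Finset.sum_add_distrib]
      congr 1
      exact Finset.sum_congr rfl fun k _ => by ring
    rw [hcombine]
    calc (∑ k : Fin b, W1 i.castSucc k.castSucc
            * ((∑ j' : Fin g, W2 k.castSucc j'.castSucc) + W2 k.castSucc (Fin.last g)))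
          + W1 i.castSucc (Fin.last b)
        = (∑ k : Fin b, W1 i.castSucc k.castSucc) + W1 i.castSucc (Fin.last b) := by
          congr 1
          exact Finset.sum_congr rfl fun k _ => by rw [Wbar_row_split h2 k, mul_one]
      _ = 1 := Wbar_row_split h1 i

lemma sum01 {N : ℕ} {f g : Fin N → ℝ} (hf : ∀ k, f k = 0 ∨ f k = 1)
    (hg : ∀ k, g k = 0 ∨ g k = 1) (hsum : ∑ k, f k = 1) :
    (∑ k, f k * g k) = 0 ∨ (∑ k, f k * g k) = 1 := by
  by_cases hall : ∀ k, f k * g k = 0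
  · exact Or.inl (Finset.sum_eq_zero fun k _ => hall k)
  · push_neg at hall
    obtain ⟨k0, hk0⟩ := hall
    have h01 : ∀ k, f k * g k = 0 ∨ f k * g k = 1 := by
      intro k
      rcases hf k with h | h <;> rcases hg k with h' | h' <;> simp [h, h']
    have hk01 : f k0 * g k0 = 1 := (h01 k0).resolve_left hk0
    have hnn : ∀ k, 0 ≤ f k * g k := by
      intro k
      rcases h01 k with h | h <;> rw [h] <;> norm_num
    have hle : ∑ k, f k * g k ≤ 1 := by
      rw [← hsum]
      refine Finset.sum_le_sum fun k _ => ?_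
      rcases hf k with h | h
      · rw [h, zero_mul]
      · rcases hg k with h' | h' <;> simp [h, h']
    have hge : 1 ≤ ∑ k, f k * g k := by
      rw [← hk01]
      exact Finset.single_le_sum (fun k _ => hnn k) (Finset.mem_univ k0)
    exact Or.inr (le_antisymm hle hge)

lemma compW_mem_Wset {a b g : ℕ} {W1 : Matrix (Fin (a+1)) (Fin (b+1)) ℝ}
    {W2 : Matrix (Fin (b+1)) (Fin (g+1)) ℝ}
    (h1 : W1 ∈ Wset a b) (h2 : W2 ∈ Wset b g) :
    compW W1 W2 ∈ Wset a g := by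
  have hbar := compW_mem_Wbar (Wset_subset_Wbar h1) (Wset_subset_Wbar h2)
  refine ⟨fun i j => ?_, hbar.2.1, hbar.2.2.1, hbar.2.2.2⟩
  rcases Fin.eq_castSucc_or_eq_last i with ⟨i', rfl⟩ | rfl <;>
    rcases Fin.eq_castSucc_or_eq_last j with ⟨j', rfl⟩ | rfl
  · rw [compW_cc]
    have : ∑ k : Fin b, W1 i'.castSucc k.castSucc * W2 k.castSucc j'.castSucc
        = ∑ k : Fin (b+1), W1 i'.castSucc k *
            (Fin.lastCases 0 (fun k' => W2 k'.castSucc j'.castSucc) k) := by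
      rw [Fin.sum_univ_castSucc (f := fun k => W1 i'.castSucc k *
        (Fin.lastCases 0 (fun k' => W2 k'.castSucc j'.castSucc) k))]
      simp
    rw [this]
    refine sum01 (fun k => h1.1 _ _) (fun k => ?_) (h1.2.2.1 i')
    rcases Fin.eq_castSucc_or_eq_last k with ⟨k', rfl⟩ | rfl <;> simp [h2.1 _ _]
  · rw [compW_cl]
    have : (∑ k : Fin b, W1 i'.castSucc k.castSucc * W2 k.castSucc (Fin.last g))
          + W1 i'.castSucc (Fin.last b)
        = ∑ k : Fin (b+1), W1 i'.castSucc k *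
            (Fin.lastCases 1 (fun k' => W2 k'.castSucc (Fin.last g)) k) := by
      rw [Fin.sum_univ_castSucc (f := fun k => W1 i'.castSucc k *
        (Fin.lastCases 1 (fun k' => W2 k'.castSucc (Fin.last g)) k))]
      simp
    rw [this]
    refine sum01 (fun k => h1.1 _ _) (fun k => ?_) (h1.2.2.1 i')
    rcases Fin.eq_castSucc_or_eq_last k with ⟨k', rfl⟩ | rfl <;> simp [h2.1 _ _]
  · rw [compW_lc]
    have : (∑ k : Fin b, W1 (Fin.last a) k.castSucc * W2 k.castSucc j'.castSucc)
          + W2 (Fin.last b) j'.castSucc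
        = ∑ k : Fin (b+1), W2 k j'.castSucc *
            (Fin.lastCases 1 (fun k' => W1 (Fin.last a) k'.castSucc) k) := by
      rw [Fin.sum_univ_castSucc (f := fun k => W2 k j'.castSucc *
        (Fin.lastCases 1 (fun k' => W1 (Fin.last a) k'.castSucc) k))]
      simp [mul_comm]
    rw [this]
    refine sum01 (fun k => h2.1 _ _) (fun k => ?_) (h2.2.1 j')
    rcases Fin.eq_castSucc_or_eq_last k with ⟨k', rfl⟩ | rfl <;> simp [h1.1 _ _]
  · rw [compW_ll]
    exact Or.inl rfl

lemma minkowski_package {ι : Type*} [Fintype ι] (p : ℝ) (hp : 1 ≤ p)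
    (w a b : ι → ℝ) (hw : ∀ l, 0 ≤ w l) (ha : ∀ l, 0 ≤ a l) (hb : ∀ l, 0 ≤ b l)
    (S S1 S2 : ℝ) (hS0 : 0 ≤ S) (hS : S ≤ ∑ l, w l * (a l + b l) ^ p)
    (hS1 : ∑ l, w l * a l ^ p ≤ S1) (hS2 : ∑ l, w l * b l ^ p ≤ S2) :
    S ^ (1/p) ≤ S1 ^ (1/p) + S2 ^ (1/p) := by
  have hp0 : p ≠ 0 := by intro h; rw [h] at hp; norm_num at hp
  have hppos : 0 < p := lt_of_lt_of_le one_pos hp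
  set A := fun l => w l ^ (1/p) * a l with hA
  set B := fun l => w l ^ (1/p) * b l with hB
  have hApow : ∀ l, A l ^ p = w l * a l ^ p := by
    intro l
    rw [hA]
    rw [Real.mul_rpow (Real.rpow_nonneg (hw l) _) (ha l)]
    congr 1
    rw [← Real.rpow_mul (hw l), one_div_mul_cancel hp0, Real.rpow_one]
  have hBpow : ∀ l, B l ^ p = w l * b l ^ p := by
    intro l
    rw [hB]
    rw [Real.mul_rpow (Real.rpow_nonneg (hw l) _) (hb l)]
    congr 1
    rw [← Real.rpow_mul (hw l)]
    rw [one_div_mul_cancel hp0, Real.rpow_one]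
  have hABpow : ∀ l, (A l + B l) ^ p = w l * (a l + b l) ^ p := by
    intro l
    rw [hA, hB, ← mul_add]
    rw [Real.mul_rpow (Real.rpow_nonneg (hw l) _) (add_nonneg (ha l) (hb l))]
    congr 1
    rw [← Real.rpow_mul (hw l)]
    rw [one_div_mul_cancel hp0, Real.rpow_one]
  have hmink := Real.Lp_add_le_of_nonneg (s := Finset.univ) (f := A) (g := B) hp
    (fun l _ => mul_nonneg (Real.rpow_nonneg (hw l) _) (ha l))
    (fun l _ => mul_nonneg (Real.rpow_nonneg (hw l) _) (hb l))
  rw [Finset.sum_congr rfl (fun l _ => hABpow l),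
    Finset.sum_congr rfl (fun l _ => hApow l),
    Finset.sum_congr rfl (fun l _ => hBpow l)] at hmink
  have h1p : (0:ℝ) ≤ 1/p := by positivity
  calc S ^ (1/p) ≤ (∑ l, w l * (a l + b l) ^ p) ^ (1/p) :=
        Real.rpow_le_rpow hS0 hS h1p
    _ ≤ (∑ l, w l * a l ^ p) ^ (1/p) + (∑ l, w l * b l ^ p) ^ (1/p) := hmink
    _ ≤ S1 ^ (1/p) + S2 ^ (1/p) := by
        refine add_le_add (Real.rpow_le_rpow ?_ hS1 h1p) (Real.rpow_le_rpow ?_ hS2 h1p)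
        · exact Finset.sum_nonneg fun l _ => mul_nonneg (hw l)
            (Real.rpow_nonneg (ha l) _)
        · exact Finset.sum_nonneg fun l _ => mul_nonneg (hw l)
            (Real.rpow_nonneg (hb l) _)

lemma c2_pow {p c : ℝ} (hp : 1 ≤ p) (hc : 0 < c) :
    (c / (2:ℝ) ^ (1/p)) ^ p = c ^ p / 2 := by
  have hp0 : p ≠ 0 := by intro h; rw [h] at hp; norm_num at hp
  rw [Real.div_rpow hc.le (Real.rpow_nonneg (by norm_num) _)]
  rw [← Real.rpow_mul (by norm_num : (0:ℝ) ≤ 2), one_div_mul_cancel hp0, Real.rpow_one]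

/-- mismatch term inequality -/
lemma mismatch_le (X Z Y : DiGraph 𝕏) {W1 : Matrix (Fin (X.n+1)) (Fin (Z.n+1)) ℝ}
    {W2 : Matrix (Fin (Z.n+1)) (Fin (Y.n+1)) ℝ}
    (hW1 : W1 ∈ WbarSet X.n Z.n) (hW2 : W2 ∈ WbarSet Z.n Y.n) :
    onorm (X.A * topLeft (compW W1 W2) - topLeft (compW W1 W2) * Y.A)
      + onorm (Y.A * (topLeft (compW W1 W2))ᵀ - (topLeft (compW W1 W2))ᵀ * X.A)
    ≤ (onorm (X.A * topLeft W1 - topLeft W1 * Z.A)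
        + onorm (Z.A * (topLeft W1)ᵀ - (topLeft W1)ᵀ * X.A))
      + (onorm (Z.A * topLeft W2 - topLeft W2 * Y.A)
        + onorm (Y.A * (topLeft W2)ᵀ - (topLeft W2)ᵀ * Z.A)) := by
  set P := topLeft W1 with hP
  set Q := topLeft W2 with hQ
  have hPnn : ∀ i k, 0 ≤ P i k := fun i k => hW1.1 _ _
  have hQnn : ∀ k j, 0 ≤ Q k j := fun k j => hW2.1 _ _
  have hProw : ∀ i, ∑ k, P i k ≤ 1 := fun i => topLeft_row_le hW1 i
  have hPcol : ∀ k, ∑ i, P i k ≤ 1 := fun k => topLeft_col_le hW1 k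
  have hQrow : ∀ k, ∑ j, Q k j ≤ 1 := fun k => topLeft_row_le hW2 k
  have hQcol : ∀ j, ∑ k, Q k j ≤ 1 := fun j => topLeft_col_le hW2 j
  rw [topLeft_compW]
  have key1 : X.A * (P * Q) - (P * Q) * Y.A =
      (X.A * P - P * Z.A) * Q + P * (Z.A * Q - Q * Y.A) := by
    simp only [Matrix.sub_mul, Matrix.mul_sub, Matrix.mul_assoc]
    abel
  have key2 : Y.A * (P * Q)ᵀ - (P * Q)ᵀ * X.A =
      (Y.A * Qᵀ - Qᵀ * Z.A) * Pᵀ + Qᵀ * (Z.A * Pᵀ - Pᵀ * X.A) := by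
    rw [Matrix.transpose_mul]
    simp only [Matrix.sub_mul, Matrix.mul_sub, Matrix.mul_assoc]
    abel
  have b1 : onorm (X.A * (P * Q) - (P * Q) * Y.A) ≤
      onorm (X.A * P - P * Z.A) + onorm (Z.A * Q - Q * Y.A) := by
    rw [key1]
    refine (onorm_add_le _ _).trans (add_le_add ?_ ?_)
    · exact onorm_mul_le_right _ Q hQnn hQrow
    · exact onorm_mul_le_left P _ hPnn hPcol
  have b2 : onorm (Y.A * (P * Q)ᵀ - (P * Q)ᵀ * X.A) ≤
      onorm (Y.A * Qᵀ - Qᵀ * Z.A) + onorm (Z.A * Pᵀ - Pᵀ * X.A) := by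
    rw [key2]
    refine (onorm_add_le _ _).trans (add_le_add ?_ ?_)
    · refine onorm_mul_le_right _ Pᵀ (fun k j => hPnn j k) fun k => ?_
      simpa [Matrix.transpose_apply] using hPcol k
    · refine onorm_mul_le_left Qᵀ _ (fun i k => hQnn k i) fun k => ?_
      simpa [Matrix.transpose_apply] using hQrow k
  linarith

lemma objD_comp_root_le (p c ε : ℝ) (hp : 1 ≤ p) (hc : 0 < c) (hε : 0 < ε)
    (X Z Y : DiGraph 𝕏) {W1 : Matrix (Fin (X.n+1)) (Fin (Z.n+1)) ℝ}
    {W2 : Matrix (Fin (Z.n+1)) (Fin (Y.n+1)) ℝ}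
    (hW1 : W1 ∈ WbarSet X.n Z.n) (hW2 : W2 ∈ WbarSet Z.n Y.n) :
    objD p c ε X Y (compW W1 W2) ^ (1/p)
      ≤ objD p c ε X Z W1 ^ (1/p) + objD p c ε Z Y W2 ^ (1/p) := by
  have hp0 : p ≠ 0 := by intro h; rw [h] at hp; norm_num at hp
  have hppos : 0 < p := lt_of_lt_of_le one_pos hp
  set c2 : ℝ := c / (2:ℝ) ^ (1/p) with hc2def
  have hc2nn : 0 ≤ c2 := by positivity
  have hc2p : c2 ^ p = c ^ p / 2 := c2_pow hp hc
  set E1 : ℝ := ε ^ p / 4 * (onorm (X.A * topLeft W1 - topLeft W1 * Z.A)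
      + onorm (Z.A * (topLeft W1)ᵀ - (topLeft W1)ᵀ * X.A)) with hE1def
  set E2 : ℝ := ε ^ p / 4 * (onorm (Z.A * topLeft W2 - topLeft W2 * Y.A)
      + onorm (Y.A * (topLeft W2)ᵀ - (topLeft W2)ᵀ * Z.A)) with hE2def
  have hεp : (0:ℝ) ≤ ε ^ p / 4 := by positivity
  have hE1nn : 0 ≤ E1 := mul_nonneg hεp (add_nonneg (onorm_nonneg _) (onorm_nonneg _))
  have hE2nn : 0 ≤ E2 := mul_nonneg hεp (add_nonneg (onorm_nonneg _) (onorm_nonneg _))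
  have hE1root : (E1 ^ (1/p)) ^ p = E1 := by
    rw [← Real.rpow_mul hE1nn, one_div_mul_cancel hp0, Real.rpow_one]
  have hE2root : (E2 ^ (1/p)) ^ p = E2 := by
    rw [← Real.rpow_mul hE2nn, one_div_mul_cancel hp0, Real.rpow_one]
  have hzrp : (0:ℝ) ^ p = 0 := Real.zero_rpow hp0
  -- index type and data
  set w : ((Fin X.n × Fin Z.n × Fin Y.n) ⊕ ((Fin X.n × Fin Z.n) ⊕ ((Fin Z.n × Fin Y.n) ⊕ ((Fin X.n) ⊕ ((Fin Y.n) ⊕ (Fin 2)))))) → ℝ := Sum.elim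
      (fun t => W1 t.1.castSucc t.2.1.castSucc * W2 t.2.1.castSucc t.2.2.castSucc)
      (Sum.elim
        (fun t => W1 t.1.castSucc t.2.castSucc * W2 t.2.castSucc (Fin.last Y.n))
        (Sum.elim
          (fun t => W1 (Fin.last X.n) t.1.castSucc * W2 t.1.castSucc t.2.castSucc)
          (Sum.elim
            (fun i => W1 i.castSucc (Fin.last Z.n))
            (Sum.elim
              (fun j => W2 (Fin.last Z.n) j.castSucc)
              (fun _ => 1))))) with hwdef
  set av : ((Fin X.n × Fin Z.n × Fin Y.n) ⊕ ((Fin X.n × Fin Z.n) ⊕ ((Fin Z.n × Fin Y.n) ⊕ ((Fin X.n) ⊕ ((Fin Y.n) ⊕ (Fin 2)))))) → ℝ := Sum.elim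
      (fun t => dist (X.nodes t.1) (Z.nodes t.2.1))
      (Sum.elim
        (fun t => dist (X.nodes t.1) (Z.nodes t.2))
        (Sum.elim (fun _ => c2) (Sum.elim (fun _ => c2)
          (Sum.elim (fun _ => 0) ![E1 ^ (1/p), 0])))) with havdef
  set bv : ((Fin X.n × Fin Z.n × Fin Y.n) ⊕ ((Fin X.n × Fin Z.n) ⊕ ((Fin Z.n × Fin Y.n) ⊕ ((Fin X.n) ⊕ ((Fin Y.n) ⊕ (Fin 2)))))) → ℝ := Sum.elim
      (fun t => dist (Z.nodes t.2.1) (Y.nodes t.2.2))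
      (Sum.elim
        (fun _ => c2)
        (Sum.elim (fun t => dist (Z.nodes t.1) (Y.nodes t.2)) (Sum.elim (fun _ => 0)
          (Sum.elim (fun _ => c2) ![0, E2 ^ (1/p)])))) with hbvdef
  have hw : ∀ l, 0 ≤ w l := by
    rintro (t | t | t | i | j | t) <;>
      first
        | exact mul_nonneg (hW1.1 _ _) (hW2.1 _ _)
        | exact hW1.1 _ _
        | exact hW2.1 _ _
        | exact zero_le_one
  have ha : ∀ l, 0 ≤ av l := by
    rintro (t | t | t | i | j | t)
    · exact dist_nonneg
    · exact dist_nonneg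
    · exact hc2nn
    · exact hc2nn
    · exact le_refl 0
    · show (0:ℝ) ≤ ![E1 ^ (1/p), 0] t
      fin_cases t
      · simpa using Real.rpow_nonneg hE1nn _
      · simp
  have hb : ∀ l, 0 ≤ bv l := by
    rintro (t | t | t | i | j | t)
    · exact dist_nonneg
    · exact hc2nn
    · exact dist_nonneg
    · exact le_refl 0
    · exact hc2nn
    · show (0:ℝ) ≤ ![0, E2 ^ (1/p)] t
      fin_cases t
      · simp
      · simpa using Real.rpow_nonneg hE2nn _
  -- evaluate the three packaged sums
  have hQ1 : ∑ l, w l * (av l + bv l) ^ p =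
      (∑ i : Fin X.n, ∑ k : Fin Z.n, ∑ j : Fin Y.n, W1 i.castSucc k.castSucc * W2 k.castSucc j.castSucc *
        (dist (X.nodes i) (Z.nodes k) + dist (Z.nodes k) (Y.nodes j)) ^ p)
      + ((∑ i : Fin X.n, ∑ k : Fin Z.n, W1 i.castSucc k.castSucc * W2 k.castSucc (Fin.last Y.n) *
          (dist (X.nodes i) (Z.nodes k) + c2) ^ p)
      + ((∑ k : Fin Z.n, ∑ j : Fin Y.n, W1 (Fin.last X.n) k.castSucc * W2 k.castSucc j.castSucc *
          (c2 + dist (Z.nodes k) (Y.nodes j)) ^ p)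
      + ((∑ i : Fin X.n, W1 i.castSucc (Fin.last Z.n) * (c2 + 0) ^ p)
      + ((∑ j : Fin Y.n, W2 (Fin.last Z.n) j.castSucc * (0 + c2) ^ p)
      + (1 * (E1 ^ (1/p) + ![(0:ℝ), E2 ^ (1/p)] 0) ^ p
          + 1 * (![E1 ^ (1/p), (0:ℝ)] 1 + E2 ^ (1/p)) ^ p))))) := by
    rw [hwdef, havdef, hbvdef]
    simp only [Fintype.sum_sum_type, Fintype.sum_prod_type, Fin.sum_univ_two,
      Sum.elim_inl, Sum.elim_inr, Matrix.cons_val_zero, Matrix.cons_val_one, Matrix.head_cons]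
  have hQ2 : ∑ l, w l * av l ^ p =
      (∑ i : Fin X.n, ∑ k : Fin Z.n, ∑ j : Fin Y.n, W1 i.castSucc k.castSucc * W2 k.castSucc j.castSucc *
        dist (X.nodes i) (Z.nodes k) ^ p)
      + ((∑ i : Fin X.n, ∑ k : Fin Z.n, W1 i.castSucc k.castSucc * W2 k.castSucc (Fin.last Y.n) *
          dist (X.nodes i) (Z.nodes k) ^ p)
      + ((∑ k : Fin Z.n, ∑ j : Fin Y.n, W1 (Fin.last X.n) k.castSucc * W2 k.castSucc j.castSucc * c2 ^ p)
      + ((∑ i : Fin X.n, W1 i.castSucc (Fin.last Z.n) * c2 ^ p)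
      + ((∑ j : Fin Y.n, W2 (Fin.last Z.n) j.castSucc * (0:ℝ) ^ p)
      + (1 * (E1 ^ (1/p)) ^ p + 1 * (![E1 ^ (1/p), (0:ℝ)] 1) ^ p))))) := by
    rw [hwdef, havdef]
    simp only [Fintype.sum_sum_type, Fintype.sum_prod_type, Fin.sum_univ_two,
      Sum.elim_inl, Sum.elim_inr, Matrix.cons_val_zero, Matrix.cons_val_one, Matrix.head_cons]
  have hQ3 : ∑ l, w l * bv l ^ p =
      (∑ i : Fin X.n, ∑ k : Fin Z.n, ∑ j : Fin Y.n, W1 i.castSucc k.castSucc * W2 k.castSucc j.castSucc *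
        dist (Z.nodes k) (Y.nodes j) ^ p)
      + ((∑ i : Fin X.n, ∑ k : Fin Z.n, W1 i.castSucc k.castSucc * W2 k.castSucc (Fin.last Y.n) * c2 ^ p)
      + ((∑ k : Fin Z.n, ∑ j : Fin Y.n, W1 (Fin.last X.n) k.castSucc * W2 k.castSucc j.castSucc *
          dist (Z.nodes k) (Y.nodes j) ^ p)
      + ((∑ i : Fin X.n, W1 i.castSucc (Fin.last Z.n) * (0:ℝ) ^ p)
      + ((∑ j : Fin Y.n, W2 (Fin.last Z.n) j.castSucc * c2 ^ p)
      + (1 * (![(0:ℝ), E2 ^ (1/p)] 0) ^ p + 1 * (E2 ^ (1/p)) ^ p))))) := by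
    rw [hwdef, hbvdef]
    simp only [Fintype.sum_sum_type, Fintype.sum_prod_type, Fin.sum_univ_two,
      Sum.elim_inl, Sum.elim_inr, Matrix.cons_val_zero, Matrix.cons_val_one, Matrix.head_cons]
  -- decompositions of the three objectives
  have hcompmem := compW_mem_Wbar hW1 hW2
  have hobjXY : objD p c ε X Y (compW W1 W2) =
      (∑ i : Fin X.n, ∑ j : Fin Y.n, dist (X.nodes i) (Y.nodes j) ^ p *
        compW W1 W2 i.castSucc j.castSucc)
      + c ^ p / 2 * (∑ i : Fin X.n, compW W1 W2 i.castSucc (Fin.last Y.n))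
      + c ^ p / 2 * (∑ j : Fin Y.n, compW W1 W2 (Fin.last X.n) j.castSucc)
      + ε ^ p / 4 * (onorm (X.A * topLeft (compW W1 W2) - topLeft (compW W1 W2) * Y.A)
          + onorm (Y.A * (topLeft (compW W1 W2))ᵀ - (topLeft (compW W1 W2))ᵀ * X.A)) := by
    rw [objD, trace_decomp p c X Y _ hcompmem.2.2.2]
  have hobjXZ : objD p c ε X Z W1 =
      (∑ i : Fin X.n, ∑ k : Fin Z.n, dist (X.nodes i) (Z.nodes k) ^ p * W1 i.castSucc k.castSucc)
      + c ^ p / 2 * (∑ i : Fin X.n, W1 i.castSucc (Fin.last Z.n))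
      + c ^ p / 2 * (∑ k : Fin Z.n, W1 (Fin.last X.n) k.castSucc)
      + E1 := by
    rw [objD, trace_decomp p c X Z _ hW1.2.2.2, hE1def]
  have hobjZY : objD p c ε Z Y W2 =
      (∑ k : Fin Z.n, ∑ j : Fin Y.n, dist (Z.nodes k) (Y.nodes j) ^ p * W2 k.castSucc j.castSucc)
      + c ^ p / 2 * (∑ k : Fin Z.n, W2 k.castSucc (Fin.last Y.n))
      + c ^ p / 2 * (∑ j : Fin Y.n, W2 (Fin.last Z.n) j.castSucc)
      + E2 := by
    rw [objD, trace_decomp p c Z Y _ hW2.2.2.2, hE2def]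
  -- trace bound pieces for hS
  have hTA : ∑ i : Fin X.n, ∑ j : Fin Y.n, dist (X.nodes i) (Y.nodes j) ^ p *
      compW W1 W2 i.castSucc j.castSucc
      ≤ ∑ i : Fin X.n, ∑ k : Fin Z.n, ∑ j : Fin Y.n,
        W1 i.castSucc k.castSucc * W2 k.castSucc j.castSucc *
          (dist (X.nodes i) (Z.nodes k) + dist (Z.nodes k) (Y.nodes j)) ^ p := by
    refine Finset.sum_le_sum fun i _ => ?_
    have lhs_eq : ∑ j : Fin Y.n, dist (X.nodes i) (Y.nodes j) ^ p *
        compW W1 W2 i.castSucc j.castSucc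
        = ∑ k : Fin Z.n, ∑ j : Fin Y.n, dist (X.nodes i) (Y.nodes j) ^ p *
            (W1 i.castSucc k.castSucc * W2 k.castSucc j.castSucc) := by
      rw [Finset.sum_comm]
      refine Finset.sum_congr rfl fun j _ => ?_
      rw [compW_cc, Finset.mul_sum]
    rw [lhs_eq]
    refine Finset.sum_le_sum fun k _ => Finset.sum_le_sum fun j _ => ?_
    rw [mul_comm]
    refine mul_le_mul_of_nonneg_left ?_ (mul_nonneg (hW1.1 _ _) (hW2.1 _ _))
    exact Real.rpow_le_rpow dist_nonneg (dist_triangle _ (Z.nodes k) _) hppos.le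
  have hSB : c ^ p / 2 * (∑ i : Fin X.n, compW W1 W2 i.castSucc (Fin.last Y.n))
      ≤ (∑ i : Fin X.n, ∑ k : Fin Z.n, W1 i.castSucc k.castSucc * W2 k.castSucc (Fin.last Y.n) *
          (dist (X.nodes i) (Z.nodes k) + c2) ^ p)
        + ∑ i : Fin X.n, W1 i.castSucc (Fin.last Z.n) * (c2 + 0) ^ p := by
    have lhs_eq : c ^ p / 2 * (∑ i : Fin X.n, compW W1 W2 i.castSucc (Fin.last Y.n))
        = (∑ i : Fin X.n, ∑ k : Fin Z.n, W1 i.castSucc k.castSucc *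
            W2 k.castSucc (Fin.last Y.n) * (c ^ p / 2))
          + ∑ i : Fin X.n, W1 i.castSucc (Fin.last Z.n) * (c ^ p / 2) := by
      rw [Finset.mul_sum, ← Finset.sum_add_distrib]
      refine Finset.sum_congr rfl fun i _ => ?_
      rw [compW_cl, mul_add, Finset.mul_sum]
      congr 1
      · exact Finset.sum_congr rfl fun k _ => by ring
      · ring
    rw [lhs_eq]
    refine add_le_add (Finset.sum_le_sum fun i _ => Finset.sum_le_sum fun k _ => ?_)
      (Finset.sum_le_sum fun i _ => ?_)
    · refine mul_le_mul_of_nonneg_left ?_ (mul_nonneg (hW1.1 _ _) (hW2.1 _ _))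
      rw [← hc2p]
      exact Real.rpow_le_rpow hc2nn (le_add_of_nonneg_left dist_nonneg) hppos.le
    · rw [add_zero, hc2p]
  have hSC : c ^ p / 2 * (∑ j : Fin Y.n, compW W1 W2 (Fin.last X.n) j.castSucc)
      ≤ (∑ k : Fin Z.n, ∑ j : Fin Y.n, W1 (Fin.last X.n) k.castSucc * W2 k.castSucc j.castSucc *
          (c2 + dist (Z.nodes k) (Y.nodes j)) ^ p)
        + ∑ j : Fin Y.n, W2 (Fin.last Z.n) j.castSucc * (0 + c2) ^ p := by
    have step1 : ∀ j : Fin Y.n, c ^ p / 2 * compW W1 W2 (Fin.last X.n) j.castSucc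
        = (∑ k : Fin Z.n, W1 (Fin.last X.n) k.castSucc * W2 k.castSucc j.castSucc * (c ^ p / 2))
          + W2 (Fin.last Z.n) j.castSucc * (c ^ p / 2) := by
      intro j
      rw [compW_lc, mul_add, Finset.mul_sum]
      congr 1
      · exact Finset.sum_congr rfl fun k _ => by ring
      · ring
    have lhs_eq : c ^ p / 2 * (∑ j : Fin Y.n, compW W1 W2 (Fin.last X.n) j.castSucc)
        = (∑ k : Fin Z.n, ∑ j : Fin Y.n, W1 (Fin.last X.n) k.castSucc * W2 k.castSucc j.castSucc
            * (c ^ p / 2))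
          + ∑ j : Fin Y.n, W2 (Fin.last Z.n) j.castSucc * (c ^ p / 2) := by
      rw [Finset.mul_sum, Finset.sum_congr rfl fun j _ => step1 j, Finset.sum_add_distrib]
      congr 1
      exact Finset.sum_comm
    rw [lhs_eq]
    refine add_le_add (Finset.sum_le_sum fun k _ => Finset.sum_le_sum fun j _ => ?_)
      (Finset.sum_le_sum fun j _ => ?_)
    · refine mul_le_mul_of_nonneg_left ?_ (mul_nonneg (hW1.1 _ _) (hW2.1 _ _))
      rw [← hc2p]
      exact Real.rpow_le_rpow hc2nn (le_add_of_nonneg_right dist_nonneg) hppos.le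
    · rw [zero_add, hc2p]
  have hM : ε ^ p / 4 * (onorm (X.A * topLeft (compW W1 W2) - topLeft (compW W1 W2) * Y.A)
      + onorm (Y.A * (topLeft (compW W1 W2))ᵀ - (topLeft (compW W1 W2))ᵀ * X.A))
      ≤ E1 + E2 := by
    rw [hE1def, hE2def, ← mul_add]
    exact mul_le_mul_of_nonneg_left (mismatch_le X Z Y hW1 hW2) hεp
  have h6 : 1 * (E1 ^ (1/p) + ![(0:ℝ), E2 ^ (1/p)] 0) ^ p
      + 1 * (![E1 ^ (1/p), (0:ℝ)] 1 + E2 ^ (1/p)) ^ p = E1 + E2 := by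
    simp only [Matrix.cons_val_zero, Matrix.cons_val_one, Matrix.head_cons,
      add_zero, zero_add, one_mul]
    rw [hE1root, hE2root]
  have hS : objD p c ε X Y (compW W1 W2) ≤ ∑ l, w l * (av l + bv l) ^ p := by
    rw [hobjXY, hQ1]
    linarith [hTA, hSB, hSC, hM, h6]
  -- hS1
  have hB12 : (∑ i : Fin X.n, ∑ k : Fin Z.n, ∑ j : Fin Y.n,
        W1 i.castSucc k.castSucc * W2 k.castSucc j.castSucc * dist (X.nodes i) (Z.nodes k) ^ p)
      + (∑ i : Fin X.n, ∑ k : Fin Z.n, W1 i.castSucc k.castSucc * W2 k.castSucc (Fin.last Y.n) *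
          dist (X.nodes i) (Z.nodes k) ^ p)
      = ∑ i : Fin X.n, ∑ k : Fin Z.n, dist (X.nodes i) (Z.nodes k) ^ p *
          W1 i.castSucc k.castSucc := by
    rw [← Finset.sum_add_distrib]
    refine Finset.sum_congr rfl fun i _ => ?_
    rw [← Finset.sum_add_distrib]
    refine Finset.sum_congr rfl fun k _ => ?_
    have hin : ∑ j : Fin Y.n, W1 i.castSucc k.castSucc * W2 k.castSucc j.castSucc *
        dist (X.nodes i) (Z.nodes k) ^ p
        = (W1 i.castSucc k.castSucc * dist (X.nodes i) (Z.nodes k) ^ p) *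
          ∑ j : Fin Y.n, W2 k.castSucc j.castSucc := by
      rw [Finset.mul_sum]
      exact Finset.sum_congr rfl fun j _ => by ring
    rw [hin]
    have hsplit := Wbar_row_split hW2 k
    have : ∑ j : Fin Y.n, W2 k.castSucc j.castSucc = 1 - W2 k.castSucc (Fin.last Y.n) := by
      linarith
    rw [this]
    ring
  have hrow2le : ∀ k : Fin Z.n, ∑ j : Fin Y.n, W2 k.castSucc j.castSucc ≤ 1 := by
    intro k
    have := Wbar_row_split hW2 k
    have := hW2.1 k.castSucc (Fin.last Y.n)
    linarith
  have hcol1le : ∀ k : Fin Z.n, ∑ i : Fin X.n, W1 i.castSucc k.castSucc ≤ 1 := by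
    intro k
    have := Wbar_col_split hW1 k
    have := hW1.1 (Fin.last X.n) k.castSucc
    linarith
  have hB3 : ∑ k : Fin Z.n, ∑ j : Fin Y.n,
      W1 (Fin.last X.n) k.castSucc * W2 k.castSucc j.castSucc * c2 ^ p
      ≤ c ^ p / 2 * ∑ k : Fin Z.n, W1 (Fin.last X.n) k.castSucc := by
    rw [Finset.mul_sum]
    refine Finset.sum_le_sum fun k _ => ?_
    have hin : ∑ j : Fin Y.n, W1 (Fin.last X.n) k.castSucc * W2 k.castSucc j.castSucc * c2 ^ p
        = (W1 (Fin.last X.n) k.castSucc * (c ^ p / 2)) * ∑ j : Fin Y.n, W2 k.castSucc j.castSucc := by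
      rw [Finset.mul_sum]
      exact Finset.sum_congr rfl fun j _ => by rw [hc2p]; ring
    rw [hin]
    have hnn : 0 ≤ W1 (Fin.last X.n) k.castSucc * (c ^ p / 2) :=
      mul_nonneg (hW1.1 _ _) (by positivity)
    calc (W1 (Fin.last X.n) k.castSucc * (c ^ p / 2)) * ∑ j : Fin Y.n, W2 k.castSucc j.castSucc
        ≤ (W1 (Fin.last X.n) k.castSucc * (c ^ p / 2)) * 1 :=
          mul_le_mul_of_nonneg_left (hrow2le k) hnn
      _ = c ^ p / 2 * W1 (Fin.last X.n) k.castSucc := by ring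
  have hB4 : ∑ i : Fin X.n, W1 i.castSucc (Fin.last Z.n) * c2 ^ p
      = c ^ p / 2 * ∑ i : Fin X.n, W1 i.castSucc (Fin.last Z.n) := by
    rw [Finset.mul_sum]
    exact Finset.sum_congr rfl fun i _ => by rw [hc2p]; ring
  have hB5 : ∑ j : Fin Y.n, W2 (Fin.last Z.n) j.castSucc * (0:ℝ) ^ p = 0 := by
    rw [hzrp]
    simp
  have hB6 : 1 * (E1 ^ (1/p)) ^ p + 1 * (![E1 ^ (1/p), (0:ℝ)] 1) ^ p = E1 := by
    simp only [Matrix.cons_val_one, Matrix.head_cons, one_mul]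
    rw [hE1root, Matrix.cons_val_zero, hzrp, add_zero]
  have hS1 : ∑ l, w l * av l ^ p ≤ objD p c ε X Z W1 := by
    rw [hQ2, hobjXZ]
    linarith [hB12, hB3, hB4, hB5, hB6]
  -- hS2
  have hC13 : (∑ i : Fin X.n, ∑ k : Fin Z.n, ∑ j : Fin Y.n,
        W1 i.castSucc k.castSucc * W2 k.castSucc j.castSucc * dist (Z.nodes k) (Y.nodes j) ^ p)
      + (∑ k : Fin Z.n, ∑ j : Fin Y.n, W1 (Fin.last X.n) k.castSucc * W2 k.castSucc j.castSucc *
          dist (Z.nodes k) (Y.nodes j) ^ p)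
      = ∑ k : Fin Z.n, ∑ j : Fin Y.n, dist (Z.nodes k) (Y.nodes j) ^ p *
          W2 k.castSucc j.castSucc := by
    have hswap : ∑ i : Fin X.n, ∑ k : Fin Z.n, ∑ j : Fin Y.n,
        W1 i.castSucc k.castSucc * W2 k.castSucc j.castSucc * dist (Z.nodes k) (Y.nodes j) ^ p
        = ∑ k : Fin Z.n, ∑ j : Fin Y.n, (∑ i : Fin X.n, W1 i.castSucc k.castSucc) *
            (W2 k.castSucc j.castSucc * dist (Z.nodes k) (Y.nodes j) ^ p) := by
      rw [Finset.sum_comm]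
      refine Finset.sum_congr rfl fun k _ => ?_
      rw [Finset.sum_comm]
      refine Finset.sum_congr rfl fun j _ => ?_
      rw [Finset.sum_mul]
      exact Finset.sum_congr rfl fun i _ => by ring
    rw [hswap, ← Finset.sum_add_distrib]
    refine Finset.sum_congr rfl fun k _ => ?_
    rw [← Finset.sum_add_distrib]
    refine Finset.sum_congr rfl fun j _ => ?_
    have hsplit := Wbar_col_split hW1 k
    have : ∑ i : Fin X.n, W1 i.castSucc k.castSucc = 1 - W1 (Fin.last X.n) k.castSucc := by
      linarith
    rw [this]
    ring
  have hC2 : ∑ i : Fin X.n, ∑ k : Fin Z.n,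
      W1 i.castSucc k.castSucc * W2 k.castSucc (Fin.last Y.n) * c2 ^ p
      ≤ c ^ p / 2 * ∑ k : Fin Z.n, W2 k.castSucc (Fin.last Y.n) := by
    have hswap : ∑ i : Fin X.n, ∑ k : Fin Z.n,
        W1 i.castSucc k.castSucc * W2 k.castSucc (Fin.last Y.n) * c2 ^ p
        = ∑ k : Fin Z.n, (∑ i : Fin X.n, W1 i.castSucc k.castSucc) *
            (W2 k.castSucc (Fin.last Y.n) * (c ^ p / 2)) := by
      rw [Finset.sum_comm]
      refine Finset.sum_congr rfl fun k _ => ?_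
      rw [Finset.sum_mul]
      exact Finset.sum_congr rfl fun i _ => by rw [hc2p]; ring
    rw [hswap, Finset.mul_sum]
    refine Finset.sum_le_sum fun k _ => ?_
    have hnn : 0 ≤ W2 k.castSucc (Fin.last Y.n) * (c ^ p / 2) :=
      mul_nonneg (hW2.1 _ _) (by positivity)
    calc (∑ i : Fin X.n, W1 i.castSucc k.castSucc) * (W2 k.castSucc (Fin.last Y.n) * (c ^ p / 2))
        ≤ 1 * (W2 k.castSucc (Fin.last Y.n) * (c ^ p / 2)) :=
          mul_le_mul_of_nonneg_right (hcol1le k) hnn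
      _ = c ^ p / 2 * W2 k.castSucc (Fin.last Y.n) := by ring
  have hC4 : ∑ i : Fin X.n, W1 i.castSucc (Fin.last Z.n) * (0:ℝ) ^ p = 0 := by
    rw [hzrp]
    simp
  have hC5 : ∑ j : Fin Y.n, W2 (Fin.last Z.n) j.castSucc * c2 ^ p
      = c ^ p / 2 * ∑ j : Fin Y.n, W2 (Fin.last Z.n) j.castSucc := by
    rw [Finset.mul_sum]
    exact Finset.sum_congr rfl fun j _ => by rw [hc2p]; ring
  have hC6 : 1 * (![(0:ℝ), E2 ^ (1/p)] 0) ^ p + 1 * (E2 ^ (1/p)) ^ p = E2 := by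
    simp only [Matrix.cons_val_zero, one_mul]
    rw [hE2root, hzrp, zero_add]
  have hS2 : ∑ l, w l * bv l ^ p ≤ objD p c ε Z Y W2 := by
    rw [hQ3, hobjZY]
    linarith [hC13, hC2, hC4, hC5, hC6]
  exact minkowski_package p hp w av bv hw ha hb _ _ _
    (objD_nonneg hp hc hε X Y hcompmem) hS hS1 hS2

lemma gospaD_triangle (p c ε : ℝ) (hp : 1 ≤ p) (hc : 0 < c) (hε : 0 < ε)
    (X Z Y : DiGraph 𝕏) :
    gospaD p c ε X Y ≤ gospaD p c ε X Z + gospaD p c ε Z Y := by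
  obtain ⟨W1, hW1, hInf1, -⟩ := exists_min p c ε X Z (isCompact_Wset _ _) (Wset_nonempty _ _)
  obtain ⟨W2, hW2, hInf2, -⟩ := exists_min p c ε Z Y (isCompact_Wset _ _) (Wset_nonempty _ _)
  unfold gospaD
  rw [hInf1, hInf2]
  have hmem : objD p c ε X Y (compW W1 W2) ∈
      {v | ∃ W ∈ Wset X.n Y.n, v = objD p c ε X Y W} :=
    ⟨compW W1 W2, compW_mem_Wset hW1 hW2, rfl⟩
  have hbdd : BddBelow {v | ∃ W ∈ Wset X.n Y.n, v = objD p c ε X Y W} := by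
    refine ⟨0, ?_⟩
    rintro v ⟨W, hW, rfl⟩
    exact objD_nonneg hp hc hε X Y (Wset_subset_Wbar hW)
  have h1 : sInf {v | ∃ W ∈ Wset X.n Y.n, v = objD p c ε X Y W}
      ≤ objD p c ε X Y (compW W1 W2) := csInf_le hbdd hmem
  have h0 : 0 ≤ sInf {v | ∃ W ∈ Wset X.n Y.n, v = objD p c ε X Y W} := by
    refine le_csInf ⟨_, hmem⟩ ?_
    rintro v ⟨W, hW, rfl⟩
    exact objD_nonneg hp hc hε X Y (Wset_subset_Wbar hW)
  calc sInf {v | ∃ W ∈ Wset X.n Y.n, v = objD p c ε X Y W} ^ (1/p)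
      ≤ objD p c ε X Y (compW W1 W2) ^ (1/p) :=
        Real.rpow_le_rpow h0 h1 (by positivity)
    _ ≤ _ := objD_comp_root_le p c ε hp hc hε X Z Y
        (Wset_subset_Wbar hW1) (Wset_subset_Wbar hW2)

lemma gospaDLP_triangle (p c ε : ℝ) (hp : 1 ≤ p) (hc : 0 < c) (hε : 0 < ε)
    (X Z Y : DiGraph 𝕏) :
    gospaDLP p c ε X Y ≤ gospaDLP p c ε X Z + gospaDLP p c ε Z Y := by
  obtain ⟨W1, hW1, hInf1, -⟩ := exists_min p c ε X Z (isCompact_Wbar _ _) (Wbar_nonempty _ _)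
  obtain ⟨W2, hW2, hInf2, -⟩ := exists_min p c ε Z Y (isCompact_Wbar _ _) (Wbar_nonempty _ _)
  unfold gospaDLP
  rw [hInf1, hInf2]
  have hmem : objD p c ε X Y (compW W1 W2) ∈
      {v | ∃ W ∈ WbarSet X.n Y.n, v = objD p c ε X Y W} :=
    ⟨compW W1 W2, compW_mem_Wbar hW1 hW2, rfl⟩
  have hbdd : BddBelow {v | ∃ W ∈ WbarSet X.n Y.n, v = objD p c ε X Y W} := by
    refine ⟨0, ?_⟩
    rintro v ⟨W, hW, rfl⟩
    exact objD_nonneg hp hc hε X Y hW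
  have h1 : sInf {v | ∃ W ∈ WbarSet X.n Y.n, v = objD p c ε X Y W}
      ≤ objD p c ε X Y (compW W1 W2) := csInf_le hbdd hmem
  have h0 : 0 ≤ sInf {v | ∃ W ∈ WbarSet X.n Y.n, v = objD p c ε X Y W} := by
    refine le_csInf ⟨_, hmem⟩ ?_
    rintro v ⟨W, hW, rfl⟩
    exact objD_nonneg hp hc hε X Y hW
  calc sInf {v | ∃ W ∈ WbarSet X.n Y.n, v = objD p c ε X Y W} ^ (1/p)
      ≤ objD p c ε X Y (compW W1 W2) ^ (1/p) :=
        Real.rpow_le_rpow h0 h1 (by positivity)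
    _ ≤ _ := objD_comp_root_le p c ε hp hc hε X Z Y hW1 hW2

lemma gospaD_eq_zero_iff (p c ε : ℝ) (hp : 1 ≤ p) (hc : 0 < c) (hε : 0 < ε)
    (X Y : DiGraph 𝕏) : gospaD p c ε X Y = 0 ↔ DiGraphEq X Y := by
  have hp0 : p ≠ 0 := by intro h; rw [h] at hp; norm_num at hp
  constructor
  · intro h
    obtain ⟨W, hWS, hInf, -⟩ := exists_min p c ε X Y (isCompact_Wset _ _) (Wset_nonempty _ _)
    unfold gospaD at h
    rw [hInf] at h
    have hnn : 0 ≤ objD p c ε X Y W := objD_nonneg hp hc hε X Y (Wset_subset_Wbar hWS)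
    have hobj0 : objD p c ε X Y W = 0 :=
      (Real.rpow_eq_zero hnn (one_div_ne_zero hp0)).mp h
    exact DiGraphEq_of_obj_zero p c ε hp hc hε X Y (Wset_subset_Wbar hWS) hobj0
  · intro h
    obtain ⟨e, hnodes, hA⟩ := equiv_of_DiGraphEq h
    have hobj := permW_obj_zero p c ε hp X Y e hnodes hA
    unfold gospaD
    have hmem : (0:ℝ) ∈ {v | ∃ W ∈ Wset X.n Y.n, v = objD p c ε X Y W} :=
      ⟨permW e, permW_mem e, hobj.symm⟩
    have hbdd : BddBelow {v | ∃ W ∈ Wset X.n Y.n, v = objD p c ε X Y W} := by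
      refine ⟨0, ?_⟩
      rintro v ⟨W, hW, rfl⟩
      exact objD_nonneg hp hc hε X Y (Wset_subset_Wbar hW)
    have h1 : sInf {v | ∃ W ∈ Wset X.n Y.n, v = objD p c ε X Y W} ≤ 0 := csInf_le hbdd hmem
    have h0 : 0 ≤ sInf {v | ∃ W ∈ Wset X.n Y.n, v = objD p c ε X Y W} := by
      refine le_csInf ⟨_, hmem⟩ ?_
      rintro v ⟨W, hW, rfl⟩
      exact objD_nonneg hp hc hε X Y (Wset_subset_Wbar hW)
    rw [le_antisymm h1 h0]
    exact Real.zero_rpow (one_div_ne_zero hp0)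

lemma gospaDLP_eq_zero_iff (p c ε : ℝ) (hp : 1 ≤ p) (hc : 0 < c) (hε : 0 < ε)
    (X Y : DiGraph 𝕏) : gospaDLP p c ε X Y = 0 ↔ DiGraphEq X Y := by
  have hp0 : p ≠ 0 := by intro h; rw [h] at hp; norm_num at hp
  constructor
  · intro h
    obtain ⟨W, hWS, hInf, -⟩ := exists_min p c ε X Y (isCompact_Wbar _ _) (Wbar_nonempty _ _)
    unfold gospaDLP at h
    rw [hInf] at h
    have hnn : 0 ≤ objD p c ε X Y W := objD_nonneg hp hc hε X Y hWS
    have hobj0 : objD p c ε X Y W = 0 :=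
      (Real.rpow_eq_zero hnn (one_div_ne_zero hp0)).mp h
    exact DiGraphEq_of_obj_zero p c ε hp hc hε X Y hWS hobj0
  · intro h
    obtain ⟨e, hnodes, hA⟩ := equiv_of_DiGraphEq h
    have hobj := permW_obj_zero p c ε hp X Y e hnodes hA
    unfold gospaDLP
    have hmem : (0:ℝ) ∈ {v | ∃ W ∈ WbarSet X.n Y.n, v = objD p c ε X Y W} :=
      ⟨permW e, Wset_subset_Wbar (permW_mem e), hobj.symm⟩
    have hbdd : BddBelow {v | ∃ W ∈ WbarSet X.n Y.n, v = objD p c ε X Y W} := by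
      refine ⟨0, ?_⟩
      rintro v ⟨W, hW, rfl⟩
      exact objD_nonneg hp hc hε X Y hW
    have h1 : sInf {v | ∃ W ∈ WbarSet X.n Y.n, v = objD p c ε X Y W} ≤ 0 := csInf_le hbdd hmem
    have h0 : 0 ≤ sInf {v | ∃ W ∈ WbarSet X.n Y.n, v = objD p c ε X Y W} := by
      refine le_csInf ⟨_, hmem⟩ ?_
      rintro v ⟨W, hW, rfl⟩
      exact objD_nonneg hp hc hε X Y hW
    rw [le_antisymm h1 h0]
    exact Real.zero_rpow (one_div_ne_zero hp0)

theorem directed_graph_gospa_is_metric' (p c ε : ℝ) (hp : 1 ≤ p) (hc : 0 < c)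
    (hε : 0 < ε) :
    ((∀ X Y : DiGraph 𝕏, gospaD p c ε X Y = 0 ↔ DiGraphEq X Y) ∧
     (∀ X Y : DiGraph 𝕏, gospaD p c ε X Y = gospaD p c ε Y X) ∧
     (∀ X Y Z : DiGraph 𝕏,
        gospaD p c ε X Y ≤ gospaD p c ε X Z + gospaD p c ε Z Y)) ∧
    ((∀ X Y : DiGraph 𝕏, gospaDLP p c ε X Y = 0 ↔ DiGraphEq X Y) ∧
     (∀ X Y : DiGraph 𝕏, gospaDLP p c ε X Y = gospaDLP p c ε Y X) ∧
     (∀ X Y Z : DiGraph 𝕏,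
        gospaDLP p c ε X Y ≤ gospaDLP p c ε X Z + gospaDLP p c ε Z Y)) :=
  ⟨⟨fun X Y => gospaD_eq_zero_iff p c ε hp hc hε X Y,
    fun X Y => gospaD_symm p c ε X Y,
    fun X Y Z => gospaD_triangle p c ε hp hc hε X Z Y⟩,
   ⟨fun X Y => gospaDLP_eq_zero_iff p c ε hp hc hε X Y,
    fun X Y => gospaDLP_symm p c ε X Y,
    fun X Y Z => gospaDLP_triangle p c ε hp hc hε X Z Y⟩⟩

end Helpers

/-- For `1 ≤ p < ∞`, `c > 0`, `ε > 0` and base metric `d`, the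
directed graph GOSPA distance is a metric on the space of directed graphs with node
attributes (identity, symmetry and triangle inequality hold); the same holds for its
LP relaxation obtained by minimizing over `𝒲̄_{X,Y}` instead of `𝒲_{X,Y}`. -/
theorem directed_graph_gospa_is_metric (p c ε : ℝ) (hp : 1 ≤ p) (hc : 0 < c)
    (hε : 0 < ε) :
    ((∀ X Y : DiGraph 𝕏, gospaD p c ε X Y = 0 ↔ DiGraphEq X Y) ∧
     (∀ X Y : DiGraph 𝕏, gospaD p c ε X Y = gospaD p c ε Y X) ∧
     (∀ X Y Z : DiGraph 𝕏,
        gospaD p c ε X Y ≤ gospaD p c ε X Z + gospaD p c ε Z Y)) ∧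
    ((∀ X Y : DiGraph 𝕏, gospaDLP p c ε X Y = 0 ↔ DiGraphEq X Y) ∧
     (∀ X Y : DiGraph 𝕏, gospaDLP p c ε X Y = gospaDLP p c ε Y X) ∧
     (∀ X Y Z : DiGraph 𝕏,
        gospaDLP p c ε X Y ≤ gospaDLP p c ε X Z + gospaDLP p c ε Z Y)) :=
  directed_graph_gospa_is_metric' p c ε hp hc hε

end GraphGOSPA
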